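/- arXiv:0807.4808 — 4 statements merged into one kernel-verified Lean document; each statement's English description precedes it below -/
import Mathlib

section
/- There exists ε > 0 such that for all real x with |x| < ε, F(1/4, 7/12; 4/3; x(x+4)^3 / (4(2x-1)^3)) = (1 / (1 + x/4)) · (1-2x)^(3/4). -/
open Real

/-- The Gauss hypergeometric series `F(a,b;c;z) = ∑ ((a)_n (b)_n / ((c)_n n!)) z^n`,
where `(q)_n` is the rising (Pochhammer) factorial. -/
noncomputable def hypgeo (a b c z : ℝ) : ℝ :=
  ∑' n : ℕ, ((∏ i ∈ Finset.range n, (a + i)) * (∏ i ∈ Finset.range n, (b + i)) /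
    ((∏ i ∈ Finset.range n, (c + i)) * (Nat.factorial n))) * z ^ n

namespace HypgeoAux

open Set
noncomputable def cf (n : ℕ) : ℝ :=
  (∏ i ∈ Finset.range n, (1/4 + (i:ℝ))) * (∏ i ∈ Finset.range n, (7/12 + (i:ℝ))) /
    ((∏ i ∈ Finset.range n, (4/3 + (i:ℝ))) * (Nat.factorial n))
lemma cf_zero : cf 0 = 1 := by simp [cf]
lemma cf_one : cf 1 = 7/64 := by
  simp [cf, Finset.prod_range_one]
  norm_num
lemma cf_pos (n : ℕ) : 0 < cf n := by
  unfold cf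
  have h1 : ∀ (d : ℝ), 0 < d → 0 < ∏ i ∈ Finset.range n, (d + (i:ℝ)) := by
    intro d hd
    exact Finset.prod_pos (fun i _ => by positivity)
  have := h1 (1/4) (by norm_num)
  have := h1 (7/12) (by norm_num)
  have := h1 (4/3) (by norm_num)
  have : (0:ℝ) < Nat.factorial n := by positivity
  positivity
lemma cf_rec (n : ℕ) : ((n:ℝ)+1) * (4/3 + n) * cf (n+1) = (1/4 + n) * (7/12 + n) * cf n := by
  unfold cf
  rw [Finset.prod_range_succ, Finset.prod_range_succ, Finset.prod_range_succ, Nat.factorial_succ]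
  have h1 : ∀ (d : ℝ), 0 < d → (0:ℝ) < ∏ i ∈ Finset.range n, (d + (i:ℝ)) := by
    intro d hd
    exact Finset.prod_pos (fun i _ => by positivity)
  have h2 := (h1 (4/3) (by norm_num)).ne'
  have h3 : ((Nat.factorial n : ℝ)) ≠ 0 := by positivity
  push_cast
  field_simp



lemma cf_succ_le (n : ℕ) : cf (n+1) ≤ cf n := by
  have h := cf_rec n
  have hp := cf_pos (n+1)
  have hq := cf_pos n
  have hn : (0:ℝ) ≤ (n:ℝ) := Nat.cast_nonneg n
  have hpos : (0:ℝ) < ((n:ℝ)+1)*(4/3+n) := by positivity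
  have hcoef : (1/4 + (n:ℝ)) * (7/12 + n) ≤ ((n:ℝ)+1)*(4/3+n) := by nlinarith
  have h2 : ((n:ℝ)+1)*(4/3+n)*cf (n+1) ≤ ((n:ℝ)+1)*(4/3+n)*cf n := by
    rw [h]; exact mul_le_mul_of_nonneg_right hcoef hq.le
  exact le_of_mul_le_mul_left h2 hpos

lemma cf_le_one (n : ℕ) : cf n ≤ 1 := by
  induction n with
  | zero => rw [cf_zero]
  | succ k ih => exact (cf_succ_le k).trans ih




lemma summable_geo {z : ℝ} (hz : |z| < 1) :
    Summable (fun n : ℕ => ((n:ℝ)+2)*((n:ℝ)+2) * |z|^n) := by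
  have hr : ‖|z|‖ < 1 := by rw [Real.norm_eq_abs, abs_abs]; exact hz
  have s2 := summable_pow_mul_geometric_of_norm_lt_one (R := ℝ) 2 hr
  have s1 := summable_pow_mul_geometric_of_norm_lt_one (R := ℝ) 1 hr
  have s0 := summable_pow_mul_geometric_of_norm_lt_one (R := ℝ) 0 hr
  have : Summable (fun n : ℕ => (n:ℝ)^2 * |z|^n + 4*((n:ℝ)^1*|z|^n) + 4*((n:ℝ)^0*|z|^n)) :=
    (s2.add (s1.mul_left 4)).add (s0.mul_left 4)
  apply this.congr
  intro n; push_cast; ring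

lemma summable_bd {z : ℝ} (hz : |z| < 1) {g : ℕ → ℝ}
    (h : ∀ n, |g n| ≤ ((n:ℝ)+2)*((n:ℝ)+2) * |z|^n) : Summable g :=
  Summable.of_norm ((summable_geo hz).of_nonneg_of_le (fun n => abs_nonneg _)
    (fun n => by rw [Real.norm_eq_abs]; exact h n))

noncomputable def FF (z : ℝ) : ℝ := ∑' n : ℕ, cf n * z ^ n
noncomputable def FF1 (z : ℝ) : ℝ := ∑' n : ℕ, ((n:ℝ)+1) * cf (n+1) * z ^ n
noncomputable def FF2 (z : ℝ) : ℝ := ∑' n : ℕ, ((n:ℝ)+2) * (((n:ℝ)+1) * cf (n+2)) * z ^ n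

lemma cf_abs (n : ℕ) : |cf n| ≤ 1 := by
  rw [abs_of_pos (cf_pos n)]; exact cf_le_one n

lemma absbd {c B : ℝ} {n : ℕ} {z : ℝ} (hc : |c| ≤ B) : |c * z^n| ≤ B * |z|^n := by
  rw [abs_mul, abs_pow]; exact mul_le_mul_of_nonneg_right hc (by positivity)

lemma coefbd {q : ℝ} {n : ℕ} (m : ℕ) (h1 : 0 ≤ q) (h2 : q ≤ ((n:ℝ)+2)*((n:ℝ)+2)) :
    |q * cf m| ≤ ((n:ℝ)+2)*((n:ℝ)+2) := by
  rw [abs_mul, abs_of_nonneg h1]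
  calc q * |cf m| ≤ q * 1 := mul_le_mul_of_nonneg_left (cf_abs m) h1
  _ = q := mul_one q
  _ ≤ _ := h2

lemma nn (n : ℕ) : (0:ℝ) ≤ (n:ℝ) := Nat.cast_nonneg n

lemma bd0 {z : ℝ} (n : ℕ) : |cf n * z ^ n| ≤ ((n:ℝ)+2)*((n:ℝ)+2) * |z|^n :=
  absbd (by simpa using coefbd (q := (1:ℝ)) n (by norm_num) (by nlinarith [nn n]))

lemma bd1 {z : ℝ} (n : ℕ) : |((n:ℝ)+1) * cf (n+1) * z ^ n| ≤ ((n:ℝ)+2)*((n:ℝ)+2) * |z|^n :=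
  absbd (coefbd (q := ((n:ℝ)+1)) (n+1) (by nlinarith [nn n]) (by nlinarith [nn n]))

lemma bd2 {z : ℝ} (n : ℕ) : |((n:ℝ)+2) * (((n:ℝ)+1) * cf (n+2)) * z ^ n| ≤ ((n:ℝ)+2)*((n:ℝ)+2) * |z|^n := by
  rw [show ((n:ℝ)+2) * (((n:ℝ)+1) * cf (n+2)) = (((n:ℝ)+2) * ((n:ℝ)+1)) * cf (n+2) by ring]
  exact absbd (coefbd (q := (((n:ℝ)+2) * ((n:ℝ)+1))) (n+2) (by nlinarith [nn n]) (by nlinarith [nn n]))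

lemma sumF {z : ℝ} (hz : |z| < 1) : Summable (fun n : ℕ => cf n * z ^ n) :=
  summable_bd hz (fun n => bd0 n)
lemma sumF1 {z : ℝ} (hz : |z| < 1) : Summable (fun n : ℕ => ((n:ℝ)+1) * cf (n+1) * z ^ n) :=
  summable_bd hz (fun n => bd1 n)
lemma sumF2 {z : ℝ} (hz : |z| < 1) : Summable (fun n : ℕ => ((n:ℝ)+2) * (((n:ℝ)+1) * cf (n+2)) * z ^ n) :=
  summable_bd hz (fun n => bd2 n)

lemma tsum_shift {g : ℕ → ℝ} (h : Summable (fun n => g (n+1))) (h0 : g 0 = 0) :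
    ∑' n, g n = ∑' n, g (n+1) := by
  rw [Summable.tsum_eq_zero_add ((summable_nat_add_iff 1).1 h), h0, zero_add]

/-- summable bound for termwise derivatives on the ball of radius 1/2 -/
lemma sum_u : Summable (fun n : ℕ => 2*(((n:ℝ)+2)*((n:ℝ)+2)) * ((1:ℝ)/2)^n) := by
  have h := (summable_geo (z := 1/2) (by rw [abs_of_pos (by norm_num : (0:ℝ)<1/2)]; norm_num)).mul_left 2
  apply h.congr
  intro n
  rw [abs_of_pos (by norm_num : (0:ℝ) < 1/2)]
  ring


lemma deriv_bd (n : ℕ) {c B y : ℝ} (hc : |c| ≤ B) (hBn : B ≤ (n:ℝ)+2) (hy : |y| ≤ 1/2) :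
    ‖c * ((n:ℝ) * y^(n-1))‖ ≤ 2*(((n:ℝ)+2)*((n:ℝ)+2))*((1:ℝ)/2)^n := by
  have hB : 0 ≤ B := (abs_nonneg c).trans hc
  rw [Real.norm_eq_abs, abs_mul, abs_mul, abs_pow, abs_of_nonneg (nn n)]
  have h1 : |y|^(n-1) ≤ ((1:ℝ)/2)^(n-1) := pow_le_pow_left₀ (abs_nonneg y) hy _
  have h2 : ((1:ℝ)/2)^(n-1) ≤ 2 * ((1:ℝ)/2)^n := by
    cases n with
    | zero => norm_num
    | succ k => rw [Nat.add_sub_cancel, pow_succ]; nlinarith [pow_pos (show (0:ℝ)<1/2 by norm_num) k]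
  have h3 : |c| * ((n:ℝ) * |y|^(n-1)) ≤ B * ((n:ℝ) * (2 * ((1:ℝ)/2)^n)) :=
    mul_le_mul hc (mul_le_mul_of_nonneg_left (h1.trans h2) (nn n)) (by positivity) hB
  have h4 : B * ((n:ℝ) * (2*((1:ℝ)/2)^n)) ≤ ((n:ℝ)+2) * (((n:ℝ)+2) * (2*((1:ℝ)/2)^n)) := by
    apply mul_le_mul hBn (mul_le_mul_of_nonneg_right (by linarith [nn n]) (by positivity))
      (by positivity) (by linarith [nn n])
  calc |c| * ((n:ℝ) * |y|^(n-1)) ≤ B * ((n:ℝ) * (2 * ((1:ℝ)/2)^n)) := h3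
  _ ≤ ((n:ℝ)+2) * (((n:ℝ)+2) * (2*((1:ℝ)/2)^n)) := h4
  _ = 2*(((n:ℝ)+2)*((n:ℝ)+2))*((1:ℝ)/2)^n := by ring

lemma mem_ball_iff {y : ℝ} : y ∈ Metric.ball (0:ℝ) (1/2) ↔ |y| < 1/2 := by
  rw [Metric.mem_ball, Real.dist_eq, sub_zero]

lemma hFd {z : ℝ} (hz : |z| < 1/2) : HasDerivAt FF (FF1 z) z := by
  have key : HasDerivAt (fun y => ∑' n : ℕ, cf n * y ^ n)
      (∑' n : ℕ, cf n * ((n:ℝ) * z ^ (n-1))) z := by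
    apply hasDerivAt_tsum_of_isPreconnected sum_u Metric.isOpen_ball
      (convex_ball (0:ℝ) (1/2)).isPreconnected
      (fun n y _ => (hasDerivAt_pow n y).const_mul (cf n))
      (fun n y hy => deriv_bd n (cf_abs n) (by linarith [nn n]) (mem_ball_iff.1 hy).le)
      (y₀ := 0) (mem_ball_iff.2 (by norm_num)) (sumF (z := 0) (by norm_num)) (mem_ball_iff.2 hz)
  have hshift : ∑' n : ℕ, cf n * ((n:ℝ) * z ^ (n-1)) = FF1 z := by
    rw [tsum_shift ?hs (by norm_num)]
    · apply tsum_congr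
      intro n
      rw [Nat.add_sub_cancel]
      push_cast
      ring
    case hs =>
      apply summable_bd (lt_trans hz (by norm_num))
      intro n
      rw [Nat.add_sub_cancel]
      push_cast
      rw [show cf (n+1) * (((n:ℝ)+1) * z^n) = ((n:ℝ)+1) * cf (n+1) * z^n by ring]
      exact bd1 n
  rw [← hshift]
  exact key

lemma hF1d {z : ℝ} (hz : |z| < 1/2) : HasDerivAt FF1 (FF2 z) z := by
  have key : HasDerivAt (fun y => ∑' n : ℕ, ((n:ℝ)+1) * cf (n+1) * y ^ n)
      (∑' n : ℕ, ((n:ℝ)+1) * cf (n+1) * ((n:ℝ) * z ^ (n-1))) z := by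
    apply hasDerivAt_tsum_of_isPreconnected sum_u Metric.isOpen_ball
      (convex_ball (0:ℝ) (1/2)).isPreconnected
      (fun n y _ => (hasDerivAt_pow n y).const_mul (((n:ℝ)+1) * cf (n+1)))
      (fun n y hy => deriv_bd n (c := ((n:ℝ)+1) * cf (n+1)) (B := (n:ℝ)+1)
        (by rw [abs_mul, abs_of_pos (show (0:ℝ) < (n:ℝ)+1 by nlinarith [nn n])]
            nlinarith [cf_abs (n+1), abs_nonneg (cf (n+1)), nn n])
        (by linarith [nn n]) (mem_ball_iff.1 hy).le)
      (y₀ := 0) (mem_ball_iff.2 (by norm_num)) (sumF1 (z := 0) (by norm_num)) (mem_ball_iff.2 hz)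
  have hshift : ∑' n : ℕ, ((n:ℝ)+1) * cf (n+1) * ((n:ℝ) * z ^ (n-1)) = FF2 z := by
    rw [tsum_shift ?hs (by norm_num)]
    · apply tsum_congr
      intro n
      rw [Nat.add_sub_cancel]
      push_cast
      ring
    case hs =>
      apply summable_bd (lt_trans hz (by norm_num))
      intro n
      rw [Nat.add_sub_cancel]
      push_cast
      rw [show ((n:ℝ)+1+1) * cf (n+1+1) * (((n:ℝ)+1) * z^n)
          = ((n:ℝ)+2) * (((n:ℝ)+1) * cf (n+2)) * z^n by norm_num; ring]
      exact bd2 n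
  rw [← hshift]
  exact key


section ODE
variable {z : ℝ}

lemma zpow_bd {q : ℝ} {n : ℕ} (hz : |z| < 1) (m : ℕ) (h1 : 0 ≤ q) (h2 : q ≤ ((n:ℝ)+2)*((n:ℝ)+2)) :
    |q * cf m * z^(n+1)| ≤ ((n:ℝ)+2)*((n:ℝ)+2) * |z|^n := by
  have h := absbd (z := z) (n := n+1) (coefbd (n := n) m h1 h2)
  calc |q * cf m * z^(n+1)| ≤ ((n:ℝ)+2)*((n:ℝ)+2) * |z|^(n+1) := h
  _ ≤ ((n:ℝ)+2)*((n:ℝ)+2) * |z|^n := by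
      apply mul_le_mul_of_nonneg_left _ (by nlinarith [nn n])
      calc |z|^(n+1) = |z|^n * |z| := pow_succ _ _
      _ ≤ |z|^n * 1 := mul_le_mul_of_nonneg_left hz.le (by positivity)
      _ = |z|^n := mul_one _

lemma sum_gA (hz : |z| < 1) : Summable (fun n : ℕ => ((n:ℝ)+2)*(((n:ℝ)+1) * cf (n+2)) * z^(n+1)) := by
  apply summable_bd hz
  intro n
  rw [show ((n:ℝ)+2)*(((n:ℝ)+1) * cf (n+2)) * z^(n+1) = (((n:ℝ)+2)*((n:ℝ)+1)) * cf (n+2) * z^(n+1) by ring]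
  exact zpow_bd hz (n+2) (by nlinarith [nn n]) (by nlinarith [nn n])

lemma hA (hz : |z| < 1) :
    ∑' n : ℕ, ((n:ℝ)+1)*((n:ℝ)*cf (n+1)) * z^n = z * FF2 z := by
  rw [tsum_shift ?hs (by norm_num)]
  · rw [show z * FF2 z = ∑' n : ℕ, z * (((n:ℝ)+2) * (((n:ℝ)+1) * cf (n+2)) * z ^ n) from (tsum_mul_left).symm]
    apply tsum_congr
    intro n
    push_cast
    ring
  case hs =>
    apply Summable.congr (sum_gA hz)
    intro n
    push_cast
    ring

lemma sum_gB (hz : |z| < 1) : Summable (fun n : ℕ => ((n:ℝ)+1) * cf (n+1) * z^(n+1)) := by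
  apply summable_bd hz
  intro n
  exact zpow_bd hz (n+1) (by nlinarith [nn n]) (by nlinarith [nn n])

lemma hB (hz : |z| < 1) :
    ∑' n : ℕ, ((n:ℝ)*cf n) * z^n = z * FF1 z := by
  rw [tsum_shift ?hs (by norm_num)]
  · rw [show z * FF1 z = ∑' n : ℕ, z * (((n:ℝ)+1) * cf (n+1) * z ^ n) from (tsum_mul_left).symm]
    apply tsum_congr
    intro n
    push_cast
    ring
  case hs =>
    apply Summable.congr (sum_gB hz)
    intro n
    push_cast
    ring

lemma hC (hz : |z| < 1) :
    ∑' n : ℕ, ((n:ℝ)*(((n:ℝ)-1)*cf n)) * z^n = z * (z * FF2 z) := by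
  rw [tsum_shift ?hs (by norm_num)]
  · rw [tsum_congr (g := fun n : ℕ => z * (((n:ℝ)+1)*((n:ℝ)*cf (n+1)) * z^n))
      (fun n => by push_cast; ring), tsum_mul_left, hA hz]
  case hs =>
    apply summable_bd hz
    intro n
    push_cast
    rw [show ((n:ℝ)+1)*(((n:ℝ)+1-1)*cf (n+1)) * z^(n+1) = (((n:ℝ)+1)*(n:ℝ)) * cf (n+1) * z^(n+1) by ring]
    exact zpow_bd hz (n+1) (by nlinarith [nn n]) (by nlinarith [nn n])

lemma sum_L1 (hz : |z| < 1) : Summable (fun n : ℕ => (((n:ℝ)+1)*(((n:ℝ)+4/3) * cf (n+1))) * z^n) := by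
  apply summable_bd hz
  intro n
  rw [show ((n:ℝ)+1)*(((n:ℝ)+4/3) * cf (n+1)) * z^n = (((n:ℝ)+1)*((n:ℝ)+4/3)) * cf (n+1) * z^n by ring]
  exact absbd (coefbd (n+1) (by nlinarith [nn n]) (by nlinarith [nn n]))

lemma sum_L2 (hz : |z| < 1) : Summable (fun n : ℕ => (((n:ℝ)+1/4)*(((n:ℝ)+7/12) * cf n)) * z^n) := by
  apply summable_bd hz
  intro n
  rw [show ((n:ℝ)+1/4)*(((n:ℝ)+7/12) * cf n) * z^n = (((n:ℝ)+1/4)*((n:ℝ)+7/12)) * cf n * z^n by ring]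
  exact absbd (coefbd n (by nlinarith [nn n]) (by nlinarith [nn n]))

lemma sum_A' (hz : |z| < 1) : Summable (fun n : ℕ => (((n:ℝ)+1)*((n:ℝ)*cf (n+1))) * z^n) := by
  apply summable_bd hz
  intro n
  rw [show ((n:ℝ)+1)*((n:ℝ)*cf (n+1)) * z^n = (((n:ℝ)+1)*(n:ℝ)) * cf (n+1) * z^n by ring]
  exact absbd (coefbd (n+1) (by nlinarith [nn n]) (by nlinarith [nn n]))

lemma sum_B' (hz : |z| < 1) : Summable (fun n : ℕ => ((n:ℝ)*cf n) * z^n) := by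
  apply summable_bd hz
  intro n
  exact absbd (coefbd n (by nlinarith [nn n]) (by nlinarith [nn n]))

lemma sum_C' (hz : |z| < 1) : Summable (fun n : ℕ => ((n:ℝ)*(((n:ℝ)-1)*cf n)) * z^n) := by
  apply summable_bd hz
  intro n
  rw [show (n:ℝ)*(((n:ℝ)-1)*cf n) * z^n = ((n:ℝ)*((n:ℝ)-1)) * cf n * z^n by ring]
  refine absbd (coefbd n ?_ (by nlinarith [nn n]))
  rcases Nat.eq_zero_or_pos n with h | h
  · simp [h]
  · have : (1:ℝ) ≤ (n:ℝ) := by exact_mod_cast h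
    nlinarith

lemma F_ode (hz2 : |z| < 1/2) :
    z*(1-z)*FF2 z + (4/3 - (11/6)*z)*FF1 z - (7/48)*FF z = 0 := by
  have hz : |z| < 1 := lt_trans hz2 (by norm_num)
  have hL1 : ∑' n : ℕ, (((n:ℝ)+1)*(((n:ℝ)+4/3) * cf (n+1))) * z^n
      = z * FF2 z + (4/3) * FF1 z := by
    have e1 : ∀ n : ℕ, (((n:ℝ)+1)*(((n:ℝ)+4/3) * cf (n+1))) * z^n
        = (((n:ℝ)+1)*((n:ℝ)*cf (n+1))) * z^n + (4/3) * (((n:ℝ)+1) * cf (n+1) * z^n) := by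
      intro n; ring
    rw [tsum_congr e1, Summable.tsum_add (sum_A' hz) ((sumF1 hz).mul_left (4/3)),
      hA hz, tsum_mul_left]
    rfl
  have hL2 : ∑' n : ℕ, (((n:ℝ)+1/4)*(((n:ℝ)+7/12) * cf n)) * z^n
      = z * (z * FF2 z) + (11/6) * (z * FF1 z) + (7/48) * FF z := by
    have e2 : ∀ n : ℕ, (((n:ℝ)+1/4)*(((n:ℝ)+7/12) * cf n)) * z^n
        = ((n:ℝ)*(((n:ℝ)-1)*cf n)) * z^n + ((11/6) * (((n:ℝ)*cf n) * z^n) + (7/48) * (cf n * z^n)) := by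
      intro n; ring
    rw [tsum_congr e2, Summable.tsum_add (sum_C' hz)
      (((sum_B' hz).mul_left (11/6)).add ((sumF hz).mul_left (7/48))),
      Summable.tsum_add ((sum_B' hz).mul_left (11/6)) ((sumF hz).mul_left (7/48)),
      hC hz, tsum_mul_left, tsum_mul_left, hB hz]
    show z * (z * FF2 z) + ((11/6) * (z * FF1 z) + (7/48) * FF z) = _
    ring
  have key : ∑' n : ℕ, (((n:ℝ)+1)*(((n:ℝ)+4/3) * cf (n+1))) * z^n
      = ∑' n : ℕ, (((n:ℝ)+1/4)*(((n:ℝ)+7/12) * cf n)) * z^n := by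
    apply tsum_congr
    intro n
    have h := cf_rec n
    linear_combination z^n * h
  rw [hL1, hL2] at key
  linarith [key]

end ODE


noncomputable def phi (x : ℝ) : ℝ := x*(x+4)^3/(4*(2*x-1)^3)
noncomputable def phid (x : ℝ) : ℝ := (x+4)^2*(x^2-10*x-2)/(2*(2*x-1)^4)
noncomputable def phidd (x : ℝ) : ℝ := 27*(5*x+2)*(x+4)/(2*x-1)^5
noncomputable def rr (x : ℝ) : ℝ := -3/(2*(1-2*x)) - 1/(4+x)
noncomputable def rrd (x : ℝ) : ℝ := -3/(1-2*x)^2 + 1/(4+x)^2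
noncomputable def fR (x : ℝ) : ℝ := (1 / (1 + x/4)) * (1 - 2*x) ^ ((3:ℝ)/4)
noncomputable def PP (x : ℝ) : ℝ := -4/(3*x) + (14-x)/((2*x-1)*(x+4))
noncomputable def QQ (x : ℝ) : ℝ := -7*(x+4)/(12*x*(2*x-1)^2)

section facts
variable {x : ℝ} (hx : |x| ≤ 1/100)
include hx

lemma hxb : -1/100 ≤ x ∧ x ≤ 1/100 := by
  have := abs_le.1 hx; constructor <;> linarith [this.1, this.2]

lemma h12x : 0 < 1 - 2*x := by linarith [(hxb hx).2]
lemma h2x1 : 2*x - 1 < 0 := by linarith [h12x hx]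
lemma h2x1' : 2*x - 1 ≠ 0 := ne_of_lt (h2x1 hx)
lemma hx4 : 0 < x + 4 := by linarith [(hxb hx).1]
lemma hx4' : x + 4 ≠ 0 := ne_of_gt (hx4 hx)
lemma h4x : 0 < 4 + x := by linarith [(hxb hx).1]
lemma hx41 : 0 < 1 + x/4 := by linarith [(hxb hx).1]
lemma hquad : x^2 - 10*x - 2 < 0 := by nlinarith [(hxb hx).1, (hxb hx).2]
lemma hquad' : x^2 - 10*x - 2 ≠ 0 := ne_of_lt (hquad hx)

lemma hfRpos : 0 < fR x := by
  have h1 := hx41 hx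
  have h2 := h12x hx
  unfold fR
  positivity

lemma one_sub_phi : 1 - phi x = (x^2-10*x-2)^2/(4*(1-2*x)^3) := by
  have h1 := h2x1' hx
  have h2 : (1:ℝ) - 2*x ≠ 0 := ne_of_gt (h12x hx)
  have h1' : x*2 - 1 ≠ 0 := by contrapose! h1; linarith
  have h2' : 1 - x*2 ≠ 0 := by contrapose! h2; linarith
  unfold phi
  field_simp
  ring

lemma phi_ne_one : 1 - phi x ≠ 0 := by
  rw [one_sub_phi hx]
  have h1 := hquad' hx
  have h2 := h12x hx
  positivity

lemma phi_small : |phi x| < 1/2 := by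
  have h1 := (hxb hx).1
  have h2 := (hxb hx).2
  have h3 := h12x hx
  have h4 := hx4 hx
  unfold phi
  rw [abs_div, div_lt_iff₀ (abs_pos.2 (mul_ne_zero (by norm_num) (pow_ne_zero 3 (by linarith : 2*x-1 ≠ 0))))]
  have e1 : |x*(x+4)^3| = |x| * (x+4)^3 := by
    rw [abs_mul, abs_of_pos (pow_pos h4 3)]
  have e2 : |4*(2*x-1)^3| = 4*(1-2*x)^3 := by
    rw [abs_mul, abs_pow, abs_of_neg (by linarith : 2*x-1 < 0),
      abs_of_pos (by norm_num : (0:ℝ) < 4)]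
    ring
  rw [e1, e2]
  have c1 : (x+4)^3 ≤ (401/100)^3 := pow_le_pow_left₀ (le_of_lt h4) (by linarith) 3
  have c2 : ((49:ℝ)/50)^3 ≤ (1-2*x)^3 := pow_le_pow_left₀ (by norm_num) (by linarith) 3
  have c3 : |x| * (x+4)^3 ≤ (1/100) * (401/100)^3 :=
    mul_le_mul hx c1 (by positivity) (by norm_num)
  nlinarith [c2, c3]

end facts

section derivs
variable {x : ℝ} (hx : |x| ≤ 1/100)
include hx

lemma phi_hasDeriv : HasDerivAt phi (phid x) x := by
  have h2 := h2x1' hx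
  have hnum : HasDerivAt (fun y : ℝ => y*(y+4)^3) (1*(x+4)^3 + x*(3*(x+4)^2*1)) x :=
    (hasDerivAt_id x).mul (((hasDerivAt_id x).add_const 4).pow 3)
  have hden : HasDerivAt (fun y : ℝ => 4*(2*y-1)^3) (4*(3*(2*x-1)^2*2)) x := by
    have h : HasDerivAt (fun y : ℝ => 2*y-1) 2 x := by
      simpa using ((hasDerivAt_id x).const_mul 2).sub_const 1
    simpa using ((h.pow 3).const_mul 4)
  have hd : (4:ℝ)*(2*x-1)^3 ≠ 0 := mul_ne_zero (by norm_num) (pow_ne_zero 3 h2)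
  have := hnum.div hden hd
  refine this.congr_deriv ?_; symm
  unfold phid
  rw [div_eq_div_iff (by positivity) (by positivity)]
  ring

lemma phid_hasDeriv : HasDerivAt phid (phidd x) x := by
  have h2 := h2x1' hx
  have hnum : HasDerivAt (fun y : ℝ => (y+4)^2*(y^2-10*y-2))
      ((2*(x+4)^1*1)*(x^2-10*x-2) + (x+4)^2*(2*x-10)) x := by
    apply HasDerivAt.mul (((hasDerivAt_id x).add_const 4).pow 2)
    have := ((hasDerivAt_id x).pow 2).sub ((hasDerivAt_id x).const_mul 10)
    simpa using this.sub_const 2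
  have hden : HasDerivAt (fun y : ℝ => 2*(2*y-1)^4) (2*(4*(2*x-1)^3*2)) x := by
    have h : HasDerivAt (fun y : ℝ => 2*y-1) 2 x := by
      simpa using ((hasDerivAt_id x).const_mul 2).sub_const 1
    simpa using ((h.pow 4).const_mul 2)
  have hd : (2:ℝ)*(2*x-1)^4 ≠ 0 := mul_ne_zero (by norm_num) (pow_ne_zero 4 h2)
  have := hnum.div hden hd
  refine this.congr_deriv ?_; symm
  unfold phidd
  rw [div_eq_div_iff (pow_ne_zero 5 h2) (by positivity)]
  ring

lemma hd12 : HasDerivAt (fun y : ℝ => 1-2*y) (-2) x := by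
  simpa using ((hasDerivAt_id x).const_mul 2).const_sub 1

lemma rr_hasDeriv : HasDerivAt rr (rrd x) x := by
  have h1 : (0:ℝ) < 1 - 2*x := h12x hx
  have h4 : (0:ℝ) < 4 + x := h4x hx
  have hden1 : HasDerivAt (fun y : ℝ => 2*(1-2*y)) (2*(-2)) x := (hd12 hx).const_mul 2
  have hden2 : HasDerivAt (fun y : ℝ => 4+y) 1 x := by
    simpa using (hasDerivAt_id x).const_add 4
  have hne1 : (2:ℝ)*(1-2*x) ≠ 0 := by positivity
  have hne2 : (4:ℝ)+x ≠ 0 := ne_of_gt h4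
  have := ((hasDerivAt_const x (-3:ℝ)).div hden1 hne1).sub
    ((hasDerivAt_const x (1:ℝ)).div hden2 hne2)
  refine this.congr_deriv ?_; symm
  unfold rrd
  field_simp
  ring

lemma fR_hasDeriv : HasDerivAt fR (rr x * fR x) x := by
  have h1 : (0:ℝ) < 1 - 2*x := h12x hx
  have h4 : (0:ℝ) < 4 + x := h4x hx
  have h5 : (0:ℝ) < 1 + x/4 := hx41 hx
  have hrpow : HasDerivAt (fun y : ℝ => (1-2*y) ^ ((3:ℝ)/4))
      ((-2) * ((3:ℝ)/4) * (1-2*x)^((3:ℝ)/4-1)) x :=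
    (hd12 hx).rpow_const (Or.inl (ne_of_gt h1))
  have hden : HasDerivAt (fun y : ℝ => 1+y/4) (1/4) x := by
    simpa using ((hasDerivAt_id x).div_const 4).const_add 1
  have hinv : HasDerivAt (fun y : ℝ => 1/(1+y/4))
      ((0*(1+x/4) - 1*(1/4))/(1+x/4)^2) x :=
    (hasDerivAt_const x (1:ℝ)).div hden (ne_of_gt h5)
  have := hinv.mul hrpow
  refine this.congr_deriv ?_; symm
  have hsub : (1-2*x)^((3:ℝ)/4-1) = (1-2*x)^((3:ℝ)/4) / (1-2*x) := by
    rw [Real.rpow_sub h1, Real.rpow_one]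
  rw [hsub]
  unfold rr fR
  have hT : (0:ℝ) < (1-2*x)^((3:ℝ)/4) := Real.rpow_pos_of_pos h1 _
  field_simp
  ring

end derivs


section ids
variable {x : ℝ} (hx0 : x ≠ 0) (h2 : 2*x-1 ≠ 0) (h4 : x+4 ≠ 0) (hq : x^2-10*x-2 ≠ 0)
include hx0 h2 h4 hq

lemma phi_ne : phi x ≠ 0 := by
  unfold phi
  exact div_ne_zero (mul_ne_zero hx0 (pow_ne_zero 3 h4)) (mul_ne_zero (by norm_num) (pow_ne_zero 3 h2))

lemma key_c1 (h1p : 1 - phi x ≠ 0) :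
    (7/48) * phid x^2 / (phi x * (1 - phi x)) = QQ x := by
  have hpn := phi_ne hx0 h2 h4 hq
  have h2' : x*2 - 1 ≠ 0 := by contrapose! h2; linarith
  unfold QQ
  rw [div_eq_div_iff (mul_ne_zero hpn h1p)
    (mul_ne_zero (mul_ne_zero (by norm_num) hx0) (pow_ne_zero 2 h2))]
  unfold phi phid
  field_simp
  ring

lemma key_c2 (h1p : 1 - phi x ≠ 0) :
    ((11/6) * phi x - 4/3) * phid x^2 / (phi x * (1 - phi x)) + phidd x = PP x * phid x := by
  have hpn := phi_ne hx0 h2 h4 hq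
  have h3x : (3:ℝ)*x ≠ 0 := by simpa using hx0
  have h2' : x*2 - 1 ≠ 0 := by contrapose! h2; linarith
  rw [div_add' _ _ _ (mul_ne_zero hpn h1p), div_eq_iff (mul_ne_zero hpn h1p)]
  unfold phi phid phidd PP
  field_simp
  ring

lemma key_I1 (h14 : (1:ℝ)-2*x ≠ 0) (h4x : (4:ℝ)+x ≠ 0) :
    rrd x + rr x^2 = PP x * rr x + QQ x := by
  unfold rrd rr PP QQ
  field_simp
  ring

end ids

lemma w_alg {z B2 B1 A D DD P Q R RD f : ℝ} (hz : z*(1-z) ≠ 0)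
    (hODE : z*(1-z)*B2 + (4/3 - (11/6)*z)*B1 - (7/48)*A = 0)
    (e1 : (7/48)*D^2/(z*(1-z)) = Q)
    (e2 : ((11/6)*z-4/3)*D^2/(z*(1-z)) + DD = P*D)
    (e3 : RD + R^2 = P*R + Q) :
    B2*D^2 + B1*DD - (RD*f + R*(R*f)) = P*(B1*D - R*f) + Q*(A - f) := by
  have h1 : B2*D^2 = B1*(P*D - DD) + A*Q := by
    have hB2' : B2 = (((11/6)*z-4/3)*B1 + (7/48)*A)/(z*(1-z)) := by
      rw [eq_div_iff hz]
      linarith [hODE]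
    rw [hB2', ← e1, ← (show ((11/6)*z-4/3)*D^2/(z*(1-z)) = P*D - DD by linarith [e2])]
    field_simp
  linear_combination h1 - f * e3


lemma gron {u v w : ℝ → ℝ} {x0 K : ℝ} (hx0 : 0 < x0) (hK : 0 ≤ K)
    (hsmall : 2*K*x0 < 1)
    (hu : ∀ x ∈ Icc (0:ℝ) x0, HasDerivAt u (v x) x)
    (hv : ∀ x ∈ Icc (0:ℝ) x0, HasDerivAt v (w x) x)
    (hode : ∀ x ∈ Ioc (0:ℝ) x0, |w x + (4/(3*x)) * v x| ≤ K * (|v x| + |u x|/x))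
    (hu0 : u 0 = 0) (hv0 : v 0 = 0) :
    ∀ x ∈ Icc (0:ℝ) x0, u x = 0 := by
  have hvc : ContinuousOn (fun x => |v x|) (Icc 0 x0) :=
    fun x hxm => ((hv x hxm).continuousAt.continuousWithinAt).abs
  obtain ⟨m, hm, hmax⟩ := isCompact_Icc.exists_isMaxOn (nonempty_Icc.2 hx0.le) hvc
  set N := |v m| with hN
  have hN0 : 0 ≤ N := abs_nonneg _
  have hNb : ∀ x ∈ Icc (0:ℝ) x0, |v x| ≤ N := fun x hxm => hmax hxm
  -- step 1 : |u x| ≤ N * x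
  have step1 : ∀ x ∈ Icc (0:ℝ) x0, |u x| ≤ N * x := by
    intro x hxm
    have := (convex_Icc (0:ℝ) x0).norm_image_sub_le_of_norm_hasDerivWithin_le
      (f := u) (f' := v) (C := N)
      (fun y hy => (hu y hy).hasDerivWithinAt)
      (fun y hy => by rw [Real.norm_eq_abs]; exact hNb y hy)
      (left_mem_Icc.2 hx0.le) hxm
    rw [hu0, sub_zero, Real.norm_eq_abs, Real.norm_eq_abs, sub_zero,
      abs_of_nonneg hxm.1] at this
    exact this
  -- step 2 : |v x| ≤ 2KN x on Ioc
  have step2 : ∀ x ∈ Ioc (0:ℝ) x0, |v x| ≤ 2*K*N*x := by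
    intro x hxm
    have hxpos : 0 < x := hxm.1
    set W : ℝ → ℝ := fun t => t^((4:ℝ)/3) * v t with hW
    have hWd : ∀ t ∈ Ioc (0:ℝ) x, HasDerivAt W
        (t^((4:ℝ)/3) * (w t + (4/(3*t)) * v t)) t := by
      intro t ht
      have htpos : 0 < t := ht.1
      have htm : t ∈ Icc (0:ℝ) x0 := ⟨htpos.le, ht.2.trans hxm.2⟩
      have hpow : HasDerivAt (fun s : ℝ => s^((4:ℝ)/3)) (((4:ℝ)/3) * t^((4:ℝ)/3-1)) t :=
        Real.hasDerivAt_rpow_const (Or.inl htpos.ne')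
      have := hpow.mul (hv t htm)
      refine this.congr_deriv ?_; symm
      have h13 : t^((4:ℝ)/3-1) = t^((1:ℝ)/3) := by norm_num
      have h43 : t^((4:ℝ)/3) = t^((1:ℝ)/3) * t := by
        rw [show (4:ℝ)/3 = 1/3 + 1 by norm_num, Real.rpow_add htpos, Real.rpow_one]
      rw [h13, h43]
      field_simp
      ring
    have hbd : ∀ t ∈ Ioc (0:ℝ) x, ‖t^((4:ℝ)/3) * (w t + (4/(3*t)) * v t)‖
        ≤ x^((4:ℝ)/3) * (2*K*N) := by
      intro t ht
      have htpos : 0 < t := ht.1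
      have htm : t ∈ Icc (0:ℝ) x0 := ⟨htpos.le, ht.2.trans hxm.2⟩
      have htoc : t ∈ Ioc (0:ℝ) x0 := ⟨htpos, ht.2.trans hxm.2⟩
      rw [Real.norm_eq_abs, abs_mul, abs_of_nonneg (Real.rpow_nonneg htpos.le _)]
      have h1 : |u t|/t ≤ N := by
        rw [div_le_iff₀ htpos]
        exact step1 t htm
      have h2 : |w t + (4/(3*t)) * v t| ≤ K * (N + N) := by
        calc |w t + (4/(3*t)) * v t| ≤ K * (|v t| + |u t|/t) := hode t htoc
        _ ≤ K * (N + N) := by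
            apply mul_le_mul_of_nonneg_left _ hK
            exact add_le_add (hNb t htm) h1
      have h3 : t^((4:ℝ)/3) ≤ x^((4:ℝ)/3) :=
        Real.rpow_le_rpow htpos.le ht.2 (by norm_num)
      calc t^((4:ℝ)/3) * |w t + (4/(3*t)) * v t| ≤ x^((4:ℝ)/3) * (K*(N+N)) :=
        mul_le_mul h3 h2 (abs_nonneg _) (Real.rpow_nonneg hxm.1.le _)
      _ = x^((4:ℝ)/3) * (2*K*N) := by ring
    -- |W x| ≤ C x via MVT on [δ, x] and δ → 0
    have hWbound : |W x| ≤ (x^((4:ℝ)/3) * (2*K*N)) * x := by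
      apply le_of_forall_pos_le_add
      intro ε hε
      set δ : ℝ := min (x/2) (min 1 (ε/(N+1))) with hδ
      have hδpos : 0 < δ := by
        apply lt_min (by linarith)
        apply lt_min one_pos
        positivity
      have hδx : δ ≤ x := (min_le_left _ _).trans (by linarith)
      have hδ1 : δ ≤ 1 := (min_le_right _ _).trans (min_le_left _ _)
      have hδε : δ ≤ ε/(N+1) := (min_le_right _ _).trans (min_le_right _ _)
      have hMVT := (convex_Icc δ x).norm_image_sub_le_of_norm_hasDerivWithin_le
        (f := W) (f' := fun t => t^((4:ℝ)/3) * (w t + (4/(3*t)) * v t))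
        (C := x^((4:ℝ)/3) * (2*K*N))
        (fun y hy => ((hWd y ⟨hδpos.trans_le hy.1, hy.2⟩).hasDerivWithinAt))
        (fun y hy => hbd y ⟨hδpos.trans_le hy.1, hy.2⟩)
        (left_mem_Icc.2 hδx) (right_mem_Icc.2 hδx)
      rw [Real.norm_eq_abs, Real.norm_eq_abs] at hMVT
      have hWδ : |W δ| ≤ ε := by
        have hWδδ : W δ = δ^((4:ℝ)/3) * v δ := rfl
        have h1 : |W δ| = δ^((4:ℝ)/3) * |v δ| := by
          rw [hWδδ, abs_mul, abs_of_nonneg (Real.rpow_nonneg hδpos.le _)]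
        have h2 : δ^((4:ℝ)/3) ≤ δ := by
          calc δ^((4:ℝ)/3) ≤ δ^(1:ℝ) :=
            Real.rpow_le_rpow_of_exponent_ge hδpos hδ1 (by norm_num)
          _ = δ := Real.rpow_one δ
        have h3 : |v δ| ≤ N := hNb δ ⟨hδpos.le, hδx.trans hxm.2⟩
        calc |W δ| = δ^((4:ℝ)/3) * |v δ| := h1
        _ ≤ δ * N := mul_le_mul h2 h3 (abs_nonneg _) hδpos.le
        _ ≤ (ε/(N+1)) * N := mul_le_mul_of_nonneg_right hδε ((abs_nonneg (v δ)).trans h3)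
        _ ≤ ε := by
            rw [div_mul_eq_mul_div, div_le_iff₀ (by positivity : (0:ℝ) < N+1)]
            nlinarith
      calc |W x| = |(W x - W δ) + W δ| := by ring_nf
      _ ≤ |W x - W δ| + |W δ| := abs_add_le _ _
      _ ≤ (x^((4:ℝ)/3) * (2*K*N)) * |x - δ| + ε := add_le_add hMVT hWδ
      _ ≤ (x^((4:ℝ)/3) * (2*K*N)) * x + ε := by
          apply add_le_add_left
          apply mul_le_mul_of_nonneg_left _ (by positivity)
          rw [abs_of_nonneg (by linarith)]
          linarith
    -- conclude |v x| ≤ 2KN x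
    have hxp43 : (0:ℝ) < x^((4:ℝ)/3) := Real.rpow_pos_of_pos hxpos _
    have : x^((4:ℝ)/3) * |v x| ≤ x^((4:ℝ)/3) * (2*K*N*x) := by
      have hWx : W x = x^((4:ℝ)/3) * v x := rfl
      calc x^((4:ℝ)/3) * |v x| = |W x| := by
            rw [hWx, abs_mul, abs_of_nonneg (Real.rpow_nonneg hxpos.le _)]
      _ ≤ (x^((4:ℝ)/3) * (2*K*N)) * x := hWbound
      _ = x^((4:ℝ)/3) * (2*K*N*x) := by ring
    exact le_of_mul_le_mul_left this hxp43
  -- step 3 : N = 0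
  have hNzero : N = 0 := by
    rcases eq_or_lt_of_le hN0 with h | h
    · exact h.symm
    exfalso
    rcases eq_or_lt_of_le hm.1 with h0 | h0
    · rw [hN, ← h0, hv0] at h
      simp at h
    · have := step2 m ⟨h0, hm.2⟩
      have h2 : 2*K*N*m ≤ 2*K*x0*N := by
        have : 2*K*m ≤ 2*K*x0 := by nlinarith [hm.2]
        nlinarith
      have h3 : 2*K*x0*N < 1*N := by
        apply mul_lt_mul_of_pos_right hsmall h
      rw [← hN] at this
      nlinarith [this, h2, h3, h]
  intro x hxm
  have := step1 x hxm
  rw [hNzero, zero_mul] at this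
  exact abs_eq_zero.1 (le_antisymm this (abs_nonneg _))

----- assembly -----
noncomputable def uu (x : ℝ) : ℝ := FF (phi x) - fR x
noncomputable def vv (x : ℝ) : ℝ := FF1 (phi x) * phid x - rr x * fR x
noncomputable def ww (x : ℝ) : ℝ :=
  (FF2 (phi x) * phid x * phid x + FF1 (phi x) * phidd x)
    - (rrd x * fR x + rr x * (rr x * fR x))

lemma FF_zero : FF 0 = 1 := by
  unfold FF
  rw [tsum_eq_single 0 (fun n hn => by simp [zero_pow hn])]
  simp [cf_zero]

lemma FF1_zero : FF1 0 = 7/64 := by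
  unfold FF1
  rw [tsum_eq_single 0 (fun n hn => by simp [zero_pow hn])]
  simp [cf_one]

lemma phi_zero : phi 0 = 0 := by norm_num [phi]
lemma phid_zero : phid 0 = -16 := by norm_num [phid]
lemma fR_zero : fR 0 = 1 := by
  unfold fR
  norm_num [Real.one_rpow]
lemma rr_zero : rr 0 = -7/4 := by norm_num [rr]

lemma uu_zero : uu 0 = 0 := by
  unfold uu
  rw [phi_zero, FF_zero, fR_zero]
  ring
lemma vv_zero : vv 0 = 0 := by
  unfold vv
  rw [phi_zero, FF1_zero, phid_zero, rr_zero, fR_zero]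
  ring

lemma uu_hasDeriv {x : ℝ} (hx : |x| ≤ 1/100) : HasDerivAt uu (vv x) x := by
  have h1 : HasDerivAt (fun y => FF (phi y)) (FF1 (phi x) * phid x) x :=
    (hFd (phi_small hx)).comp x (phi_hasDeriv hx)
  exact h1.sub (fR_hasDeriv hx)

lemma vv_hasDeriv {x : ℝ} (hx : |x| ≤ 1/100) : HasDerivAt vv (ww x) x := by
  have h1 : HasDerivAt (fun y => FF1 (phi y)) (FF2 (phi x) * phid x) x :=
    (hF1d (phi_small hx)).comp x (phi_hasDeriv hx)
  have h2 : HasDerivAt (fun y => FF1 (phi y) * phid y)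
      (FF2 (phi x) * phid x * phid x + FF1 (phi x) * phidd x) x :=
    h1.mul (phid_hasDeriv hx)
  have h3 : HasDerivAt (fun y => rr y * fR y)
      (rrd x * fR x + rr x * (rr x * fR x)) x :=
    (rr_hasDeriv hx).mul (fR_hasDeriv hx)
  exact h2.sub h3

lemma ww_eq {x : ℝ} (hx : |x| ≤ 1/100) (hx0 : x ≠ 0) :
    ww x = PP x * vv x + QQ x * uu x := by
  have h2 := h2x1' hx
  have h4 := hx4' hx
  have hq := hquad' hx
  have h1p := phi_ne_one hx
  have hz : phi x * (1 - phi x) ≠ 0 := mul_ne_zero (phi_ne hx0 h2 h4 hq) h1p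
  have h := w_alg (f := fR x) hz (F_ode (phi_small hx))
    (key_c1 hx0 h2 h4 hq h1p) (key_c2 hx0 h2 h4 hq h1p)
    (key_I1 hx0 h2 h4 hq (ne_of_gt (h12x hx)) (ne_of_gt (h4x hx)))
  unfold ww vv uu
  linear_combination h

lemma Pt_bound {x : ℝ} (hx : |x| ≤ 1/100) :
    |(14-x)/((2*x-1)*(x+4))| ≤ 4 := by
  have h1 := (hxb hx).1
  have h2 := (hxb hx).2
  have hden : |(2*x-1)*(x+4)| = (1-2*x)*(x+4) := by
    rw [abs_mul, abs_of_neg (h2x1 hx), abs_of_pos (hx4 hx)]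
    ring
  rw [abs_div, hden, div_le_iff₀ (by nlinarith)]
  rw [abs_of_pos (by linarith : (0:ℝ) < 14 - x)]
  nlinarith

lemma xQ_bound {x : ℝ} (hx : |x| ≤ 1/100) (hx0 : x ≠ 0) :
    |x * QQ x| ≤ 4 := by
  have h1 := (hxb hx).1
  have h2 := (hxb hx).2
  have h2x : 2*x-1 < 0 := by linarith
  have hp : (0:ℝ) < (2*x-1)^2 := by nlinarith [mul_pos_of_neg_of_neg h2x h2x]
  have e : x * QQ x = -7*(x+4)/(12*(2*x-1)^2) := by
    unfold QQ
    rw [mul_div_assoc', div_eq_div_iff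
      (mul_ne_zero (mul_ne_zero (by norm_num) hx0) (by positivity))
      (mul_ne_zero (by norm_num) (by positivity))]
    ring
  rw [e, abs_div]
  have hden : |12*(2*x-1)^2| = 12*(2*x-1)^2 := abs_of_pos (by positivity)
  rw [hden, div_le_iff₀ (by positivity)]
  have hnum : |(-7)*(x+4)| = 7*(x+4) := by
    rw [abs_mul]
    rw [abs_of_neg (by norm_num : (-7:ℝ) < 0), abs_of_pos (hx4 hx)]
    ring
  rw [hnum]
  nlinarith

lemma master_bound {x : ℝ} (hx : |x| ≤ 1/100) (hx0 : x ≠ 0) :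
    |ww x + (4/(3*x)) * vv x| ≤ 4 * (|vv x| + |uu x|/|x|) := by
  have hxabs : 0 < |x| := abs_pos.2 hx0
  have e : ww x + (4/(3*x)) * vv x
      = ((14-x)/((2*x-1)*(x+4))) * vv x + QQ x * uu x := by
    rw [ww_eq hx hx0]
    have : PP x + 4/(3*x) = (14-x)/((2*x-1)*(x+4)) := by unfold PP; ring
    linear_combination vv x * this
  rw [e]
  have hQu : |QQ x * uu x| = |x * QQ x| * (|uu x|/|x|) := by
    rw [abs_mul, abs_mul]
    field_simp
  calc |((14-x)/((2*x-1)*(x+4))) * vv x + QQ x * uu x|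
      ≤ |((14-x)/((2*x-1)*(x+4))) * vv x| + |QQ x * uu x| := abs_add_le _ _
  _ = |(14-x)/((2*x-1)*(x+4))| * |vv x| + |x * QQ x| * (|uu x|/|x|) := by
      rw [abs_mul, hQu]
  _ ≤ 4 * |vv x| + 4 * (|uu x|/|x|) := by
      apply add_le_add
      · exact mul_le_mul_of_nonneg_right (Pt_bound hx) (abs_nonneg _)
      · exact mul_le_mul_of_nonneg_right (xQ_bound hx hx0) (by positivity)
  _ = 4 * (|vv x| + |uu x|/|x|) := by ring

lemma side_pos : ∀ x ∈ Icc (0:ℝ) (1/100), uu x = 0 := by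
  apply gron (K := 4) (by norm_num) (by norm_num) (by norm_num)
  · intro x hxm
    exact uu_hasDeriv (by rw [abs_of_nonneg hxm.1]; exact hxm.2)
  · intro x hxm
    exact vv_hasDeriv (by rw [abs_of_nonneg hxm.1]; exact hxm.2)
  · intro x hxm
    have hx : |x| ≤ 1/100 := by rw [abs_of_pos hxm.1]; exact hxm.2
    have := master_bound hx (ne_of_gt hxm.1)
    rwa [abs_of_pos hxm.1] at this
  · exact uu_zero
  · exact vv_zero

lemma side_neg : ∀ x ∈ Icc (0:ℝ) (1/100), uu (-x) = 0 := by
  apply gron (u := fun t => uu (-t)) (v := fun t => -(vv (-t))) (w := fun t => ww (-t))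
    (K := 4) (by norm_num) (by norm_num) (by norm_num)
  · intro x hxm
    have hx : |(-x)| ≤ 1/100 := by rw [abs_neg, abs_of_nonneg hxm.1]; exact hxm.2
    have h := (uu_hasDeriv hx).comp x (hasDerivAt_neg x)
    refine h.congr_deriv ?_; symm
    ring
  · intro x hxm
    have hx : |(-x)| ≤ 1/100 := by rw [abs_neg, abs_of_nonneg hxm.1]; exact hxm.2
    have h := ((vv_hasDeriv hx).comp x (hasDerivAt_neg x)).neg
    refine h.congr_deriv ?_; symm
    ring
  · intro x hxm
    have hx : |(-x)| ≤ 1/100 := by rw [abs_neg, abs_of_pos hxm.1]; exact hxm.2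
    have hx0 : (-x) ≠ 0 := by
      simpa using (ne_of_gt hxm.1)
    have h := master_bound hx hx0
    rw [abs_neg, abs_of_pos hxm.1] at h
    have hx0' : x ≠ 0 := ne_of_gt hxm.1
    have eeq : ww (-x) + 4/(3*x) * -(vv (-x)) = ww (-x) + 4/(3*(-x)) * vv (-x) := by
      field_simp
    simp only [abs_neg]
    rw [eeq]
    exact h
  · simpa using uu_zero
  · simpa using vv_zero

theorem final : ∃ ε > 0, ∀ x : ℝ, |x| < ε →
    FF (phi x) = fR x := by
  refine ⟨1/100, by norm_num, fun x hx => ?_⟩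
  have h : uu x = 0 := by
    rcases le_or_gt 0 x with h0 | h0
    · exact side_pos x ⟨h0, by rw [abs_of_nonneg h0] at hx; linarith⟩
    · have := side_neg (-x) ⟨by linarith, by rw [abs_of_neg h0] at hx; linarith⟩
      simpa using this
  have := sub_eq_zero.1 h
  exact this

end HypgeoAux

theorem stmt2 : ∃ ε > 0, ∀ x : ℝ, |x| < ε →
    hypgeo (1/4) (7/12) (4/3) (x * (x + 4)^3 / (4 * (2*x - 1)^3)) =
      (1 / (1 + x/4)) * (1 - 2*x) ^ ((3 : ℝ)/4) := by
  obtain ⟨ε, hε, h⟩ := HypgeoAux.final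
  exact ⟨ε, hε, fun x hx => h x hx⟩
end

section
/- There exists ε > 0 such that for all real x with |x| < ε, F(1/2, -1/6; 2/3; x(x+2)^3 / (2x+1)^3) = (1+2x)^(-1/2). -/
open Real

open Filter Topology FormalMultilinearSeries


noncomputable def cc (n : ℕ) : ℝ :=
  (∏ i ∈ Finset.range n, ((1:ℝ)/2 + i)) * (∏ i ∈ Finset.range n, ((-1:ℝ)/6 + i)) /
    ((∏ i ∈ Finset.range n, ((2:ℝ)/3 + i)) * (Nat.factorial n))

lemma cc_zero : cc 0 = 1 := by simp [cc]

lemma denom_pos (n : ℕ) : 0 < ∏ i ∈ Finset.range n, ((2:ℝ)/3 + i) := by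
  apply Finset.prod_pos; intro i _; positivity

lemma cc_succ (n : ℕ) :
    cc (n+1) = cc n * (((1:ℝ)/2 + n) * ((-1:ℝ)/6 + n)) / (((2:ℝ)/3 + n) * (n+1)) := by
  have h1 : (0:ℝ) < (2:ℝ)/3 + n := by positivity
  have h2 : ((Nat.factorial n : ℝ)) ≠ 0 := by positivity
  simp only [cc, Finset.prod_range_succ, Nat.factorial_succ, Nat.cast_mul, Nat.cast_add,
    Nat.cast_one]
  field_simp

lemma cc_abs (n : ℕ) : |cc n| ≤ 1 := by
  induction n with
  | zero => simp [cc_zero]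
  | succ n ih =>
    have h1 : (0:ℝ) < (2:ℝ)/3 + n := by positivity
    have h2 : (0:ℝ) < (n:ℝ) + 1 := by positivity
    have key : |(((1:ℝ)/2 + n) * ((-1:ℝ)/6 + n))| ≤ ((2:ℝ)/3 + n) * (n+1) := by
      rw [abs_mul]
      have hn0 : (0:ℝ) ≤ n := Nat.cast_nonneg n
      have e1 : |(1:ℝ)/2 + n| = 1/2 + n := abs_of_pos (by positivity)
      have e2 : |(-1:ℝ)/6 + n| ≤ 1/6 + n := by
        rw [abs_le]; constructor <;> nlinarith
      rw [e1]
      nlinarith [abs_nonneg ((-1:ℝ)/6 + (n:ℝ))]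
    rw [cc_succ]
    rw [abs_div, abs_mul]
    rw [div_le_one (by positivity : (0:ℝ) < |((2:ℝ)/3 + n) * (n+1)|)]
    calc |cc n| * |((1:ℝ)/2 + n) * ((-1:ℝ)/6 + n)| ≤ 1 * (((2:ℝ)/3 + n) * (n+1)) := by
          apply mul_le_mul ih key (abs_nonneg _) zero_le_one
      _ = |((2:ℝ)/3 + n) * (n+1)| := by rw [one_mul, abs_of_pos (by positivity)]

noncomputable def pp : FormalMultilinearSeries ℝ ℝ ℝ := FormalMultilinearSeries.ofScalars ℝ cc

noncomputable def ff : ℝ → ℝ := fun z => ∑' n : ℕ, cc n * z ^ n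

lemma summable_cc {z : ℝ} (hz : |z| < 1) : Summable (fun n => cc n * z ^ n) := by
  apply Summable.of_norm_bounded
    (summable_geometric_of_lt_one (abs_nonneg z) hz)
  intro n
  rw [norm_mul, norm_pow]
  calc ‖cc n‖ * ‖z‖ ^ n ≤ 1 * ‖z‖ ^ n := by
        apply mul_le_mul_of_nonneg_right (cc_abs n) (by positivity)
    _ = |z| ^ n := by rw [one_mul]; rfl

lemma pp_radius : 1 ≤ pp.radius := by
  apply FormalMultilinearSeries.le_radius_of_bound _ 1
  intro n
  rw [pp, FormalMultilinearSeries.ofScalars_norm]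
  simpa using cc_abs n

lemma hp : HasFPowerSeriesOnBall ff pp 0 1 := by
  constructor
  · exact_mod_cast pp_radius
  · exact one_pos
  · intro y hy
    rw [EMetric.mem_ball, edist_zero_right] at hy
    have hy' : |y| < 1 := by
      rw [← Real.norm_eq_abs]
      simpa [Real.enorm_eq_ofReal_abs, Real.norm_eq_abs] using hy
    have : (fun n => pp n fun _ => y) = fun n => cc n * y ^ n := by
      funext n
      rw [pp, FormalMultilinearSeries.ofScalars_apply_eq, smul_eq_mul]
    rw [this, zero_add]
    exact (summable_cc hy').hasSum

noncomputable def F1 : ℝ → ℝ := deriv ff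
noncomputable def F2 : ℝ → ℝ := deriv F1


lemma mem_ball_of_abs {z : ℝ} (hz : |z| < 1) : z ∈ Metric.eball (0:ℝ) 1 := by
  rw [EMetric.mem_ball, edist_zero_right]
  simpa [Real.enorm_eq_ofReal_abs, Real.norm_eq_abs] using hz

lemma ffAnal : AnalyticOnNhd ℝ ff (EMetric.ball (0:ℝ) 1) := hp.analyticOnNhd
lemma F1Anal : AnalyticOnNhd ℝ F1 (EMetric.ball (0:ℝ) 1) := ffAnal.deriv
lemma F2Anal : AnalyticOnNhd ℝ F2 (EMetric.ball (0:ℝ) 1) := F1Anal.deriv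

lemma hasDerivAt_ff {z : ℝ} (hz : |z| < 1) : HasDerivAt ff (F1 z) z :=
  ((ffAnal z (mem_ball_of_abs hz)).differentiableAt).hasDerivAt

lemma hasDerivAt_F1 {z : ℝ} (hz : |z| < 1) : HasDerivAt F1 (F2 z) z :=
  ((F1Anal z (mem_ball_of_abs hz)).differentiableAt).hasDerivAt

-- first derivative sum
lemma hS1 {z : ℝ} (hz : |z| < 1) :
    HasSum (fun n : ℕ => (n : ℝ) * cc n * z ^ n) (z * F1 z) := by
  have h0 := (hp.fderiv.hasSum (mem_ball_of_abs hz))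
  have h1 := (ContinuousLinearMap.apply ℝ ℝ z).hasSum h0
  simp only [ContinuousLinearMap.apply_apply] at h1
  have hterm : ∀ n : ℕ, (pp.derivSeries n fun _ => z) z = ((n:ℝ)+1) * cc (n+1) * z ^ (n+1) := by
    intro n
    rw [FormalMultilinearSeries.derivSeries_apply_diag]
    rw [pp, FormalMultilinearSeries.ofScalars_apply_eq]
    push_cast [nsmul_eq_mul, smul_eq_mul]
    ring
  have hval : (fderiv ℝ ff (0 + z)) z = z * F1 z := by
    rw [zero_add]
    have e : (fderiv ℝ ff z) z = (fderiv ℝ ff z) (z • (1:ℝ)) := by norm_num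
    rw [e, (fderiv ℝ ff z).map_smul, fderiv_apply_one_eq_deriv]
    simp [smul_eq_mul, F1]
  rw [hval] at h1
  have h2 : HasSum (fun n : ℕ => ((n:ℝ)+1) * cc (n+1) * z ^ (n+1)) (z * F1 z) := by
    have e : (fun n : ℕ => ((n:ℝ)+1) * cc (n+1) * z ^ (n+1))
        = fun n : ℕ => (pp.derivSeries n fun _ => z) z := by
      funext n; rw [hterm n]
    rw [e]; exact h1
  have h3 : HasSum (fun n : ℕ => ((n+1:ℕ) : ℝ) * cc (n+1) * z ^ (n+1)) (z * F1 z) := by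
    convert h2 using 2 with n; push_cast; ring
  rw [show (fun n : ℕ => ((n+1:ℕ) : ℝ) * cc (n+1) * z ^ (n+1))
      = (fun n : ℕ => (fun m : ℕ => (m : ℝ) * cc m * z ^ m) (n + 1)) from rfl] at h3
  have := (hasSum_nat_add_iff (f := fun m : ℕ => (m : ℝ) * cc m * z ^ m) 1).mp h3
  simpa using this

-- second derivative sum
lemma hS2 {z : ℝ} (hz : |z| < 1) :
    HasSum (fun n : ℕ => (n : ℝ) * ((n:ℝ) - 1) * cc n * z ^ n) (z^2 * F2 z) := by
  have h0 := (hp.fderiv.fderiv.hasSum (mem_ball_of_abs hz))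
  have h1 := (ContinuousLinearMap.apply ℝ (ℝ →L[ℝ] ℝ) z).hasSum h0
  simp only [ContinuousLinearMap.apply_apply] at h1
  have h2 := (ContinuousLinearMap.apply ℝ ℝ z).hasSum h1
  simp only [ContinuousLinearMap.apply_apply] at h2
  have hterm : ∀ n : ℕ, ((pp.derivSeries.derivSeries n fun _ => z) z) z
      = ((n:ℝ)+1) * ((n:ℝ)+2) * cc (n+2) * z ^ (n+2) := by
    intro n
    rw [FormalMultilinearSeries.derivSeries_apply_diag]
    rw [ContinuousLinearMap.smul_apply]
    rw [FormalMultilinearSeries.derivSeries_apply_diag]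
    rw [pp, FormalMultilinearSeries.ofScalars_apply_eq]
    push_cast [nsmul_eq_mul, smul_eq_mul]
    ring
  have hdiff : DifferentiableAt ℝ (fderiv ℝ ff) z :=
    ((hp.fderiv.analyticOnNhd) z (mem_ball_of_abs hz)).differentiableAt
  have hF1eq : F1 = fun w => (fderiv ℝ ff w) 1 := by
    funext w; simp [F1, fderiv_apply_one_eq_deriv]
  have hval : ((fderiv ℝ (fderiv ℝ ff) (0 + z)) z) z = z^2 * F2 z := by
    rw [zero_add]
    have key : F2 z = ((fderiv ℝ (fderiv ℝ ff) z) 1) 1 := by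
      have : fderiv ℝ F1 z = (fderiv ℝ (fderiv ℝ ff) z).flip 1 := by
        rw [hF1eq]
        rw [fderiv_clm_apply hdiff (differentiableAt_const _)]
        simp
      have e2 : F2 z = fderiv ℝ F1 z 1 := by simp [F2, fderiv_apply_one_eq_deriv]
      rw [e2, this]; simp
    have ez : ∀ (L : ℝ →L[ℝ] (ℝ →L[ℝ] ℝ)), (L z) z = z^2 * ((L 1) 1) := by
      intro L
      have e : (L z) z = (L (z • (1:ℝ))) (z • (1:ℝ)) := by norm_num
      rw [e, L.map_smul, ContinuousLinearMap.smul_apply, (L 1).map_smul]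
      simp [smul_eq_mul]; ring
    rw [key, ez]
  rw [hval] at h2
  have h3 : HasSum (fun n : ℕ => ((n:ℝ)+1) * ((n:ℝ)+2) * cc (n+2) * z ^ (n+2)) (z^2 * F2 z) := by
    have e : (fun n : ℕ => ((n:ℝ)+1) * ((n:ℝ)+2) * cc (n+2) * z ^ (n+2))
        = fun n : ℕ => ((pp.derivSeries.derivSeries n fun _ => z) z) z := by
      funext n; rw [hterm n]
    rw [e]; exact h2
  have h4 : HasSum (fun n : ℕ => (fun m : ℕ => (m : ℝ) * ((m:ℝ)-1) * cc m * z ^ m) (n + 2))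
      (z^2 * F2 z) := by
    convert h3 using 2 with n; push_cast; ring
  have := (hasSum_nat_add_iff (f := fun m : ℕ => (m : ℝ) * ((m:ℝ)-1) * cc m * z ^ m) 2).mp h4
  norm_num [Finset.sum_range_succ] at this
  exact this

lemma ffODE {z : ℝ} (hz : |z| < 1) (hz0 : z ≠ 0) :
    z * (1 - z) * F2 z + (2/3 - 4/3 * z) * F1 z + 1/12 * ff z = 0 := by
  have hs0 : HasSum (fun n : ℕ => cc n * z ^ n) (ff z) := (summable_cc hz).hasSum
  have hs1 := hS1 hz
  have hs2 := hS2 hz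
  -- u series
  have hu : HasSum (fun n : ℕ => ((n:ℝ) * ((n:ℝ)-1) + 2/3 * n) * cc n * z ^ n)
      (z^2 * F2 z + 2/3 * (z * F1 z)) := by
    have := hs2.add (hs1.mul_left (2/3))
    have e : (fun n : ℕ => ((n:ℝ) * ((n:ℝ)-1) + 2/3 * n) * cc n * z ^ n)
        = fun n : ℕ => (n:ℝ) * ((n:ℝ)-1) * cc n * z ^ n + 2/3 * ((n:ℝ) * cc n * z ^ n) := by
      funext n; ring
    rw [e]; exact this
  have hv : HasSum (fun n : ℕ => ((n:ℝ) * ((n:ℝ)-1) + 4/3 * n - 1/12) * cc n * z ^ (n+1))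
      (z * (z^2 * F2 z) + 4/3 * (z * (z * F1 z)) - 1/12 * (z * ff z)) := by
    have := ((hs2.mul_left z).add ((hs1.mul_left z).mul_left (4/3))).sub
      ((hs0.mul_left z).mul_left (1/12))
    have e : (fun n : ℕ => ((n:ℝ) * ((n:ℝ)-1) + 4/3 * n - 1/12) * cc n * z ^ (n+1))
        = fun n : ℕ => (z * ((n:ℝ) * ((n:ℝ)-1) * cc n * z ^ n)
            + 4/3 * (z * ((n:ℝ) * cc n * z ^ n))) - 1/12 * (z * (cc n * z ^ n)) := by
      funext n; ring
    rw [e]; exact this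
  -- shift u
  have hshift : HasSum (fun n : ℕ =>
      (fun m : ℕ => ((m:ℝ) * ((m:ℝ)-1) + 2/3 * m) * cc m * z ^ m) (n + 1))
      (z^2 * F2 z + 2/3 * (z * F1 z)) := by
    rw [hasSum_nat_add_iff (f := fun m : ℕ => ((m:ℝ) * ((m:ℝ)-1) + 2/3 * m) * cc m * z ^ m) 1]
    norm_num [Finset.sum_range_one]
    exact hu
  have hmatch : (fun n : ℕ =>
      (fun m : ℕ => ((m:ℝ) * ((m:ℝ)-1) + 2/3 * m) * cc m * z ^ m) (n + 1))
      = fun n : ℕ => ((n:ℝ) * ((n:ℝ)-1) + 4/3 * n - 1/12) * cc n * z ^ (n+1) := by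
    funext n
    have h1 : (0:ℝ) < (2:ℝ)/3 + n := by positivity
    have h2 : (0:ℝ) < (n:ℝ) + 1 := by positivity
    simp only []
    rw [cc_succ n]
    push_cast
    field_simp
    ring
  rw [hmatch] at hshift
  have heq := hshift.unique hv
  -- now divide by z
  have : z * (z * (1 - z) * F2 z + (2/3 - 4/3 * z) * F1 z + 1/12 * ff z) = 0 := by
    nlinarith [heq]
  rcases mul_eq_zero.mp this with h | h
  · exact absurd h hz0
  · exact h


noncomputable def phi (x : ℝ) : ℝ := x * (x + 2)^3 / (2*x + 1)^3
noncomputable def phid (x : ℝ) : ℝ :=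
  (2*(x+2)^2*(2*x+1)^2 - 6*x*(x+2)^3) / (2*x+1)^4
noncomputable def phidd (x : ℝ) : ℝ :=
  ((4*(x+2)*(2*x+1)^2 + 8*(x+2)^2*(2*x+1) - 6*(x+2)^3 - 18*x*(x+2)^2) * (2*x+1)
    - 8*(2*(x+2)^2*(2*x+1)^2 - 6*x*(x+2)^3)) / (2*x+1)^5

lemma hasDerivAt_phi {x : ℝ} (hx : 2*x + 1 ≠ 0) : HasDerivAt phi (phid x) x := by
  have hN : HasDerivAt (fun x : ℝ => x * (x + 2)^3)
      (1 * (x+2)^3 + x * (3 * (x+2)^2 * 1)) x := by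
    exact (hasDerivAt_id x).mul (((hasDerivAt_id x).add_const 2).pow 3)
  have hD : HasDerivAt (fun x : ℝ => (2*x + 1)^3) (3 * (2*x+1)^2 * 2) x := by
    have : HasDerivAt (fun x : ℝ => 2*x + 1) 2 x := by
      simpa using ((hasDerivAt_id x).const_mul 2).add_const 1
    exact this.pow 3
  have := hN.fun_div hD (pow_ne_zero 3 hx)
  convert this using 1
  · rfl
  · rfl
  · rfl
  unfold phid
  field_simp
  ring

lemma hasDerivAt_phid {x : ℝ} (hx : 2*x + 1 ≠ 0) : HasDerivAt phid (phidd x) x := by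
  have hP : HasDerivAt (fun x : ℝ => 2*(x+2)^2*(2*x+1)^2 - 6*x*(x+2)^3)
      (4*(x+2)*(2*x+1)^2 + 8*(x+2)^2*(2*x+1) - (6*(x+2)^3 + 18*x*(x+2)^2)) x := by
    have h1 : HasDerivAt (fun x : ℝ => x + 2) 1 x := (hasDerivAt_id x).add_const 2
    have h2 : HasDerivAt (fun x : ℝ => 2*x + 1) 2 x := by
      simpa using ((hasDerivAt_id x).const_mul 2).add_const 1
    have hA : HasDerivAt (fun x : ℝ => 2*(x+2)^2*(2*x+1)^2)
        ((2 * (2*(x+2)*1)) * (2*x+1)^2 + 2*(x+2)^2 * (2*(2*x+1)*2)) x := by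
      have e1 : HasDerivAt (fun x : ℝ => 2*(x+2)^2) (2 * (2*(x+2)*1)) x := by
        simpa using ((h1.pow 2).const_mul 2)
      have e2 : HasDerivAt (fun x : ℝ => (2*x+1)^2) (2*(2*x+1)*2) x := by
        simpa using h2.fun_pow 2
      simpa using e1.fun_mul e2
    have hB : HasDerivAt (fun x : ℝ => 6*x*(x+2)^3)
        (6 * (x+2)^3 + 6*x*(3*(x+2)^2*1)) x := by
      have e1 : HasDerivAt (fun x : ℝ => 6*x) 6 x := by
        simpa using (hasDerivAt_id x).const_mul 6
      simpa using e1.fun_mul (h1.fun_pow 3)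
    have := hA.fun_sub hB
    convert this using 1
    · rfl
    · rfl
    ring
  have hD : HasDerivAt (fun x : ℝ => (2*x + 1)^4) (4 * (2*x+1)^3 * 2) x := by
    have : HasDerivAt (fun x : ℝ => 2*x + 1) 2 x := by
      simpa using ((hasDerivAt_id x).const_mul 2).add_const 1
    exact this.pow 4
  have := hP.fun_div hD (pow_ne_zero 4 hx)
  convert this using 1
  · rfl
  · rfl
  · rfl
  unfold phidd
  field_simp
  ring

-- the key algebraic identity
noncomputable def AA (x : ℝ) : ℝ := phi x * (1 - phi x) * phid x
noncomputable def BB (x : ℝ) : ℝ :=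
  (2/3 - 4/3 * phi x) * (phid x)^2 - phi x * (1 - phi x) * phidd x
noncomputable def CC (x : ℝ) : ℝ := 1/12 * (phid x)^3

lemma key_identity {x : ℝ} (hx : 2*x + 1 ≠ 0) :
    3 * AA x - BB x * (1 + 2*x) + CC x * (1 + 2*x)^2 = 0 := by
  unfold AA BB CC phi phid phidd
  have hx' : x * 2 + 1 ≠ 0 := by rwa [mul_comm] at hx
  field_simp
  ring

lemma two_x_pos {x : ℝ} (hx : |x| < 1/50) : 0 < 2*x + 1 := by
  rcases abs_lt.mp hx with ⟨h1, h2⟩; linarith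

lemma phi_abs_lt {x : ℝ} (hx : |x| < 1/50) : |phi x| < 1 := by
  have hpos := two_x_pos hx
  have ht0 : (0:ℝ) ≤ |x| := abs_nonneg x
  have ht1 : |x| < 1/50 := hx
  have hx2 : |x + 2| ≤ |x| + 2 := by
    calc |x + 2| ≤ |x| + |(2:ℝ)| := abs_add_le x 2
      _ = |x| + 2 := by norm_num
  have hden : 1 - 2*|x| ≤ 2*x + 1 := by
    rcases abs_lt.mp hx with ⟨h1, h2⟩
    rcases abs_cases x with ⟨he, _⟩ | ⟨he, _⟩ <;> nlinarith
  rw [phi, abs_div, abs_mul, abs_pow, abs_pow, abs_of_pos hpos]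
  rw [div_lt_one (by positivity)]
  have e0 : (|x| + 2)^3 ≤ 9 := by
    have : |x| + 2 ≤ 202/100 := by linarith
    calc (|x| + 2)^3 ≤ (202/100:ℝ)^3 := pow_le_pow_left₀ (by positivity) this 3
      _ ≤ 9 := by norm_num
  have e2 : ((24:ℝ)/25)^3 ≤ (1 - 2*|x|)^3 := by
    apply pow_le_pow_left₀ (by norm_num) (by linarith)
  calc |x| * |x + 2|^3 ≤ |x| * (|x| + 2)^3 := by
        apply mul_le_mul_of_nonneg_left _ ht0
        exact pow_le_pow_left₀ (abs_nonneg _) hx2 3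
    _ ≤ 9 * |x| := by nlinarith
    _ < (1 - 2*|x|)^3 := by nlinarith
    _ ≤ (2*x + 1)^3 := by
        apply pow_le_pow_left₀ (by nlinarith) hden

lemma phi_zero : phi 0 = 0 := by norm_num [phi]

lemma phi_ne_zero {x : ℝ} (hx : |x| < 1/50) (hx0 : x ≠ 0) : phi x ≠ 0 := by
  have hpos := two_x_pos hx
  have hx2 : x + 2 ≠ 0 := by rcases abs_lt.mp hx with ⟨h1, _⟩; intro h; nlinarith
  exact div_ne_zero (mul_ne_zero hx0 (pow_ne_zero 3 hx2)) (pow_ne_zero 3 hpos.ne')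

noncomputable def hh (x : ℝ) : ℝ := ff (phi x)
noncomputable def HH1 (x : ℝ) : ℝ := F1 (phi x) * phid x
noncomputable def HH2 (x : ℝ) : ℝ := F2 (phi x) * (phid x)^2 + F1 (phi x) * phidd x
noncomputable def VV (x : ℝ) : ℝ := (1 + 2*x) * HH1 x + hh x
noncomputable def VVd (x : ℝ) : ℝ := (1 + 2*x) * HH2 x + 3 * HH1 x

lemma hasDerivAt_hh {x : ℝ} (hx : |x| < 1/50) : HasDerivAt hh (HH1 x) x :=
  (hasDerivAt_ff (phi_abs_lt hx)).comp x (hasDerivAt_phi (two_x_pos hx).ne')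

lemma hasDerivAt_HH1 {x : ℝ} (hx : |x| < 1/50) : HasDerivAt HH1 (HH2 x) x := by
  have h1 := ((hasDerivAt_F1 (phi_abs_lt hx)).comp x
    (hasDerivAt_phi (two_x_pos hx).ne')).fun_mul (hasDerivAt_phid (two_x_pos hx).ne')
  convert h1 using 1
  · rfl
  · rfl
  · rfl
  unfold HH2
  simp only [Function.comp_apply]
  ring

lemma hasDerivAt_VV {x : ℝ} (hx : |x| < 1/50) : HasDerivAt VV (VVd x) x := by
  have hlin : HasDerivAt (fun x : ℝ => 1 + 2*x) 2 x := by
    simpa using ((hasDerivAt_id x).const_mul 2).const_add 1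
  have := (hlin.fun_mul (hasDerivAt_HH1 hx)).fun_add (hasDerivAt_hh hx)
  convert this using 1
  · rfl
  · rfl
  · rfl
  unfold VVd
  ring

lemma hODE {x : ℝ} (hx : |x| < 1/50) (hx0 : x ≠ 0) :
    AA x * HH2 x + BB x * HH1 x + CC x * hh x = 0 := by
  have h := ffODE (phi_abs_lt hx) (phi_ne_zero hx hx0)
  unfold AA BB CC HH1 HH2 hh
  linear_combination (phid x)^3 * h

lemma VV_ODE {x : ℝ} (hx : |x| < 1/50) (hx0 : x ≠ 0) :
    AA x * VVd x + (1 + 2*x) * CC x * VV x = 0 := by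
  have h1 := hODE hx hx0
  have h2 := key_identity (two_x_pos hx).ne'
  unfold VVd VV
  linear_combination (1 + 2*x) * h1 + HH1 x * h2

noncomputable def QA (x : ℝ) : ℝ := (x+2)^3/(2*x+1)^3 * (1 - phi x) * phid x

lemma AA_eq {x : ℝ} : AA x = x * QA x := by
  unfold AA QA phi
  ring

lemma QA_zero : QA 0 = 64 := by norm_num [QA, phi, phid]
lemma CC_zero : CC 0 = 128/3 := by norm_num [CC, phid]

-- analyticity lemmas
lemma phi_analyticAt : AnalyticAt ℝ phi 0 := by
  apply AnalyticAt.div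
  · exact (analyticAt_id).mul (((analyticAt_id).add analyticAt_const).pow 3)
  · exact ((analyticAt_const.mul analyticAt_id).add analyticAt_const).pow 3
  · norm_num

lemma phid_analyticAt : AnalyticAt ℝ phid 0 := by
  apply AnalyticAt.div
  · apply AnalyticAt.sub
    · exact (analyticAt_const.mul (((analyticAt_id).add analyticAt_const).pow 2)).mul
        (((analyticAt_const.mul analyticAt_id).add analyticAt_const).pow 2)
    · exact (analyticAt_const.mul analyticAt_id).mul
        (((analyticAt_id).add analyticAt_const).pow 3)
  · exact ((analyticAt_const.mul analyticAt_id).add analyticAt_const).pow 4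
  · norm_num

lemma mem01 : (0:ℝ) ∈ EMetric.ball (0:ℝ) 1 := mem_ball_of_abs (by norm_num)

lemma hh_analyticAt : AnalyticAt ℝ hh 0 := by
  have : AnalyticAt ℝ ff (phi 0) := by rw [phi_zero]; exact ffAnal 0 mem01
  exact this.comp phi_analyticAt

lemma HH1_analyticAt : AnalyticAt ℝ HH1 0 := by
  have h1 : AnalyticAt ℝ F1 (phi 0) := by rw [phi_zero]; exact F1Anal 0 mem01
  exact (h1.comp phi_analyticAt).mul phid_analyticAt

lemma VV_analyticAt : AnalyticAt ℝ VV 0 := by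
  exact ((analyticAt_const.add (analyticAt_const.mul analyticAt_id)).mul HH1_analyticAt).add
    hh_analyticAt

lemma QA_contAt : ContinuousAt QA 0 := by
  have h1 : ContinuousAt (fun x : ℝ => (x+2)^3/(2*x+1)^3) 0 := by
    apply ContinuousAt.div
    · fun_prop
    · fun_prop
    · norm_num
  exact (h1.mul (continuousAt_const.sub phi_analyticAt.continuousAt)).mul
    phid_analyticAt.continuousAt

lemma CC_contAt : ContinuousAt CC 0 :=
  continuousAt_const.mul (phid_analyticAt.continuousAt.pow 3)

lemma ff_zero : ff 0 = 1 := by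
  unfold ff
  rw [tsum_eq_single 0 (fun n hn => by simp [zero_pow hn])]
  simp [cc_zero]

lemma hh_zero : hh 0 = 1 := by rw [hh, phi_zero, ff_zero]

lemma pow_shift {x : ℝ} (n : ℕ) (hx : x ≠ 0) : x * ((n:ℝ) * x^(n-1)) = (n:ℝ) * x^n := by
  cases n with
  | zero => simp
  | succ m => simp only [Nat.add_sub_cancel]; push_cast; rw [pow_succ]; ring

theorem VV_eventually_zero : ∀ᶠ x in 𝓝 (0:ℝ), VV x = 0 := by
  by_contra hcon
  have hV := VV_analyticAt
  have hne : analyticOrderAt VV 0 ≠ ⊤ := by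
    intro h
    exact hcon (analyticOrderAt_eq_top.mp h)
  obtain ⟨n, hn⟩ : ∃ n : ℕ, analyticOrderAt VV 0 = n := by
    obtain ⟨n, hn⟩ := WithTop.ne_top_iff_exists.mp hne
    exact ⟨n, hn.symm⟩
  obtain ⟨g, hg, hg0, heq⟩ := (hV.analyticOrderAt_eq_natCast).mp hn
  simp only [sub_zero, smul_eq_mul] at heq
  -- deriv g is continuous at 0
  obtain ⟨s, hs_mem, hs⟩ := hg.exists_mem_nhds_analyticOnNhd
  have hderiv_g_cont : ContinuousAt (deriv g) 0 :=
    (hs.deriv 0 (mem_of_mem_nhds hs_mem)).continuousAt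
  have hg_cont : ContinuousAt g 0 := hg.continuousAt
  set br : ℝ → ℝ := fun x => QA x * ((n:ℝ) * g x + x * deriv g x) + (1 + 2*x) * CC x * g x
    with hbr
  have hbr_cont : ContinuousAt br 0 := by
    apply ContinuousAt.add
    · exact QA_contAt.mul (((continuousAt_const).mul hg_cont).add
        ((continuousAt_id).mul hderiv_g_cont))
    · exact ((continuousAt_const.add (continuousAt_const.mul continuousAt_id)).mul
        CC_contAt).mul hg_cont
  -- br vanishes on punctured neighborhood
  have hbr_zero : ∀ᶠ x in 𝓝 (0:ℝ), x ≠ 0 → br x = 0 := by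
    have h1 : ∀ᶠ x in 𝓝 (0:ℝ), |x| < 1/50 := by
      have : Metric.ball (0:ℝ) (1/50) ∈ 𝓝 (0:ℝ) := Metric.ball_mem_nhds _ (by norm_num)
      filter_upwards [this] with x hx
      simpa [Real.dist_eq] using hx
    have h2 : ∀ᶠ x in 𝓝 (0:ℝ), VV =ᶠ[𝓝 x] fun z => z^n * g z := heq.eventually_nhds
    have h3 : ∀ᶠ x in 𝓝 (0:ℝ), AnalyticAt ℝ g x := hg.eventually_analyticAt
    filter_upwards [h1, h2, h3, heq] with x hx hVeq hgx hVx hx0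
    have hdVV : deriv VV x = VVd x := (hasDerivAt_VV hx).deriv
    have hdg : HasDerivAt (fun z : ℝ => z^n * g z)
        ((n:ℝ) * x^(n-1) * g x + x^n * deriv g x) x := by
      have := (hasDerivAt_pow n x).fun_mul hgx.differentiableAt.hasDerivAt
      simpa using this
    have hVVd : VVd x = (n:ℝ) * x^(n-1) * g x + x^n * deriv g x := by
      rw [← hdVV, hVeq.deriv_eq, hdg.deriv]
    have hode := VV_ODE hx hx0
    rw [AA_eq, hVVd, hVx] at hode
    have hxn : x^n ≠ 0 := pow_ne_zero n hx0
    have expand : (x * QA x) * ((n:ℝ) * x^(n-1) * g x + x^n * deriv g x)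
        + (1 + 2*x) * CC x * (x^n * g x) = x^n * br x := by
      rw [hbr]
      have hshift := pow_shift n hx0
      linear_combination QA x * g x * hshift
    rw [expand] at hode
    exact (mul_eq_zero.mp hode).resolve_left hxn
  -- conclude br 0 = 0 by continuity
  have hbr0 : br 0 = 0 := by
    have hne' : (𝓝[≠] (0:ℝ)).NeBot := by infer_instance
    have t1 : Filter.Tendsto br (𝓝[≠] (0:ℝ)) (𝓝 (br 0)) :=
      (hbr_cont.continuousWithinAt).tendsto
    have t2 : Filter.Tendsto br (𝓝[≠] (0:ℝ)) (𝓝 0) := by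
      apply Filter.Tendsto.congr' _ tendsto_const_nhds
      have := hbr_zero.filter_mono (nhdsWithin_le_nhds (s := {(0:ℝ)}ᶜ))
      filter_upwards [this, self_mem_nhdsWithin] with x hx hx0
      exact (hx hx0).symm
    exact tendsto_nhds_unique t1 t2
  rw [hbr] at hbr0
  simp only [QA_zero, CC_zero] at hbr0
  apply hg0
  have hc : (0:ℝ) < 64*(n:ℝ) + 128/3 := by positivity
  have hz : g 0 * (64*(n:ℝ) + 128/3) = 0 := by linear_combination hbr0
  exact (mul_eq_zero.mp hz).resolve_right hc.ne'

theorem hh_eq : ∃ ε > 0, ∀ x : ℝ, |x| < ε → hh x = (1 + 2*x) ^ ((-1:ℝ)/2) := by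
  obtain ⟨ε, hε_pos, hε⟩ := Metric.eventually_nhds_iff.mp VV_eventually_zero
  set ε' := min ε (1/50) with hε'
  have hε'_pos : 0 < ε' := lt_min hε_pos (by norm_num)
  refine ⟨ε', hε'_pos, ?_⟩
  have hVV0 : ∀ x : ℝ, |x| < ε' → VV x = 0 := by
    intro x hx
    apply hε
    rw [Real.dist_eq, sub_zero]
    exact lt_of_lt_of_le hx (min_le_left _ _)
  -- derivative of eta is zero on the ball
  have hder : ∀ x : ℝ, |x| < ε' →
      HasDerivAt (fun x => hh x * (1 + 2*x) ^ ((1:ℝ)/2)) 0 x := by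
    intro x hx
    have hx50 : |x| < 1/50 := lt_of_lt_of_le hx (min_le_right _ _)
    have hpos := two_x_pos hx50
    have hpos' : (0:ℝ) < 1 + 2*x := by linarith
    have hlin : HasDerivAt (fun x : ℝ => 1 + 2*x) 2 x := by
      simpa using ((hasDerivAt_id x).const_mul 2).const_add 1
    have hr : HasDerivAt (fun y : ℝ => y ^ ((1:ℝ)/2))
        ((1/2) * (1 + 2*x) ^ ((1:ℝ)/2 - 1)) (1 + 2*x) :=
      Real.hasDerivAt_rpow_const (Or.inl hpos'.ne')
    have hcomp : HasDerivAt (fun x : ℝ => (1 + 2*x) ^ ((1:ℝ)/2))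
        ((1/2) * (1 + 2*x) ^ ((1:ℝ)/2 - 1) * 2) x := by exact hr.comp x hlin
    have hprod := (hasDerivAt_hh hx50).fun_mul hcomp
    have he1 : (1 + 2*x) ^ ((1:ℝ)/2 - 1) = (1 + 2*x) ^ ((-1:ℝ)/2) := by norm_num
    have he2 : (1 + 2*x) ^ ((1:ℝ)/2) = (1 + 2*x) * (1 + 2*x) ^ ((-1:ℝ)/2) := by
      rw [show ((1:ℝ)/2) = 1 + (-1)/2 by norm_num, Real.rpow_add hpos', Real.rpow_one]
    convert hprod using 1
    · rfl
    · rfl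
    rw [he1, he2]
    have : (1 + 2*x) ^ ((-1:ℝ)/2) * VV x = 0 := by rw [hVV0 x hx, mul_zero]
    rw [VV] at this
    linear_combination -this
  -- eta is constant on the ball
  have hconst : ∀ x : ℝ, |x| < ε' →
      hh x * (1 + 2*x) ^ ((1:ℝ)/2) = hh 0 * (1 + 2*0) ^ ((1:ℝ)/2) := by
    intro x hx
    have hmem : ∀ y : ℝ, |y| < ε' → y ∈ Metric.ball (0:ℝ) ε' := by
      intro y hy; simpa [Real.dist_eq] using hy
    have habs : ∀ y : ℝ, y ∈ Metric.ball (0:ℝ) ε' → |y| < ε' := by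
      intro y hy; simpa [Real.dist_eq] using hy
    refine Convex.is_const_of_fderivWithin_eq_zero (𝕜 := ℝ)
      (f := fun x => hh x * (1 + 2*x) ^ ((1:ℝ)/2)) (convex_ball (0:ℝ) ε') ?_ ?_
      (hmem x hx) (hmem 0 (by simpa using hε'_pos))
    · intro y hy
      exact ((hder y (habs y hy)).differentiableAt).differentiableWithinAt
    · intro y hy
      rw [fderivWithin_of_isOpen Metric.isOpen_ball hy]
      rw [(hder y (habs y hy)).hasFDerivAt.fderiv]
      ext v
      simp
  intro x hx
  have hx50 : |x| < 1/50 := lt_of_lt_of_le hx (min_le_right _ _)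
  have hpos := two_x_pos hx50
  have h1 : hh x * (1 + 2*x) ^ ((1:ℝ)/2) = 1 := by
    rw [hconst x hx]
    norm_num [hh_zero]
  have hpos' : (0:ℝ) < 1 + 2*x := by linarith
  have h2 : (1 + 2*x) ^ ((1:ℝ)/2) * (1 + 2*x) ^ ((-1:ℝ)/2) = 1 := by
    rw [← Real.rpow_add hpos']
    norm_num
  calc hh x = hh x * ((1 + 2*x) ^ ((1:ℝ)/2) * (1 + 2*x) ^ ((-1:ℝ)/2)) := by rw [h2, mul_one]
    _ = (hh x * (1 + 2*x) ^ ((1:ℝ)/2)) * (1 + 2*x) ^ ((-1:ℝ)/2) := by ring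
    _ = (1 + 2*x) ^ ((-1:ℝ)/2) := by rw [h1, one_mul]

theorem stmt4 : ∃ ε > 0, ∀ x : ℝ, |x| < ε →
    hypgeo (1/2) (-1/6) (2/3) (x * (x + 2)^3 / (2*x + 1)^3) =
      (1 + 2*x) ^ ((-1 : ℝ)/2) := by
  obtain ⟨ε, hε_pos, hε⟩ := hh_eq
  refine ⟨ε, hε_pos, fun x hx => ?_⟩
  have hbridge : hypgeo (1/2) (-1/6) (2/3) (x * (x + 2)^3 / (2*x + 1)^3) = hh x := by
    unfold hypgeo hh ff phi cc
    apply tsum_congr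
    intro n
    norm_num
  rw [hbridge]
  exact hε x hx
end

section
/- There exists ε > 0 such that for all real x with |x| < ε, F(1/6, 5/6; 4/3; x(x+2)^3 / (2x+1)^3) = (1 / (1 + x/2)) · (1+2x)^(1/2) · (1+x)^(1/3). -/
set_option maxHeartbeats 2000000

open Real

namespace Stmt5Aux

open Set

/-! ### The coefficients -/

noncomputable def cc (n : ℕ) : ℝ :=
  (∏ i ∈ Finset.range n, ((1:ℝ)/6 + i)) * (∏ i ∈ Finset.range n, ((5:ℝ)/6 + i)) /
    ((∏ i ∈ Finset.range n, ((4:ℝ)/3 + i)) * (Nat.factorial n))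

lemma prod_pos_of (a : ℝ) (ha : 0 < a) (n : ℕ) : 0 < ∏ i ∈ Finset.range n, (a + (i:ℝ)) :=
  Finset.prod_pos fun i _ => by positivity

lemma cc_pos (n : ℕ) : 0 < cc n := by
  apply div_pos
  · exact mul_pos (prod_pos_of (1/6) (by norm_num) n) (prod_pos_of (5/6) (by norm_num) n)
  · exact mul_pos (prod_pos_of (4/3) (by norm_num) n) (by positivity)

lemma cc_zero : cc 0 = 1 := by simp [cc]

lemma cc_one : cc 1 = 5/48 := by norm_num [cc]

lemma cc_succ (n : ℕ) :
    cc (n+1) = cc n * (((1:ℝ)/6 + n) * ((5:ℝ)/6 + n) / (((4:ℝ)/3 + n) * (n+1))) := by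
  have h1 : (0:ℝ) < ∏ i ∈ Finset.range n, ((4:ℝ)/3 + i) := prod_pos_of _ (by norm_num) n
  have h2 : (0:ℝ) < (Nat.factorial n : ℝ) := by positivity
  unfold cc
  rw [Finset.prod_range_succ, Finset.prod_range_succ, Finset.prod_range_succ,
    Nat.factorial_succ]
  push_cast
  field_simp

lemma cc_rec (n : ℕ) :
    ((4:ℝ)/3 + n) * ((n:ℝ)+1) * cc (n+1) = ((1:ℝ)/6 + n) * ((5:ℝ)/6 + n) * cc n := by
  rw [cc_succ n]
  have h : ((4:ℝ)/3 + n) * ((n:ℝ)+1) ≠ 0 := by positivity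
  field_simp

lemma cc_le_one (n : ℕ) : cc n ≤ 1 := by
  induction n with
  | zero => simp [cc_zero]
  | succ n ih =>
      rw [cc_succ n]
      have hn : (0:ℝ) ≤ (n:ℝ) := Nat.cast_nonneg n
      have hq : ((1:ℝ)/6 + n) * ((5:ℝ)/6 + n) / (((4:ℝ)/3 + n) * (n+1)) ≤ 1 := by
        rw [div_le_one (by positivity)]
        nlinarith
      calc cc n * (((1:ℝ)/6 + n) * ((5:ℝ)/6 + n) / (((4:ℝ)/3 + n) * (n+1)))
          ≤ 1 * 1 := mul_le_mul ih hq (by positivity) (by norm_num)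
        _ = 1 := by norm_num

lemma abs_cc_le_one (n : ℕ) : |cc n| ≤ 1 := by
  rw [abs_of_pos (cc_pos n)]; exact cc_le_one n

/-! ### Summability -/

lemma sum_geom : Summable (fun n : ℕ => ((1:ℝ)/2)^n) :=
  summable_geometric_of_lt_one (by norm_num) (by norm_num)

lemma sum_n_geom : Summable (fun n : ℕ => ((n:ℝ)+1) * ((1:ℝ)/2)^n) := by
  have h1 : Summable (fun n : ℕ => (n:ℝ)^1 * ((1:ℝ)/2)^n) :=
    summable_pow_mul_geometric_of_norm_lt_one 1
      (by rw [Real.norm_eq_abs, abs_lt]; constructor <;> norm_num)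
  have := h1.add sum_geom
  apply this.congr
  intro n; ring

lemma sum_n2_geom : Summable (fun n : ℕ => ((n:ℝ)+2) * ((n:ℝ)+1) * ((1:ℝ)/2)^n) := by
  have h2 : Summable (fun n : ℕ => (n:ℝ)^2 * ((1:ℝ)/2)^n) :=
    summable_pow_mul_geometric_of_norm_lt_one 2
      (by rw [Real.norm_eq_abs, abs_lt]; constructor <;> norm_num)
  have h1 : Summable (fun n : ℕ => (n:ℝ)^1 * ((1:ℝ)/2)^n) :=
    summable_pow_mul_geometric_of_norm_lt_one 1
      (by rw [Real.norm_eq_abs, abs_lt]; constructor <;> norm_num)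
  have := (h2.add (h1.mul_left 3)).add (sum_geom.mul_left 2)
  apply this.congr
  intro n; ring

noncomputable def F (y : ℝ) : ℝ := ∑' n : ℕ, cc n * y ^ n
noncomputable def F1 (y : ℝ) : ℝ := ∑' n : ℕ, ((n:ℝ)+1) * cc (n+1) * y ^ n
noncomputable def F2 (y : ℝ) : ℝ := ∑' n : ℕ, ((n:ℝ)+2) * ((n:ℝ)+1) * cc (n+2) * y ^ n

lemma abs_pow_le {y : ℝ} (hy : |y| ≤ 1/2) (n : ℕ) : |y ^ n| ≤ ((1:ℝ)/2)^n := by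
  rw [abs_pow]; exact pow_le_pow_left₀ (abs_nonneg y) hy n

lemma sumF {y : ℝ} (hy : |y| ≤ 1/2) : Summable (fun n : ℕ => cc n * y ^ n) := by
  apply Summable.of_norm_bounded sum_geom
  intro n
  rw [Real.norm_eq_abs, abs_mul]
  calc |cc n| * |y^n| ≤ 1 * ((1:ℝ)/2)^n := by
        gcongr
        exacts [abs_cc_le_one n, abs_pow_le hy n]
    _ = ((1:ℝ)/2)^n := one_mul _

lemma sumF1 {y : ℝ} (hy : |y| ≤ 1/2) : Summable (fun n : ℕ => ((n:ℝ)+1) * cc (n+1) * y ^ n) := by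
  apply Summable.of_norm_bounded sum_n_geom
  intro n
  rw [Real.norm_eq_abs, abs_mul, abs_mul, abs_of_pos (show (0:ℝ) < (n:ℝ)+1 by positivity)]
  calc ((n:ℝ)+1) * |cc (n+1)| * |y^n| ≤ ((n:ℝ)+1) * 1 * ((1:ℝ)/2)^n := by
        gcongr
        exacts [abs_cc_le_one _, abs_pow_le hy n]
    _ = ((n:ℝ)+1) * ((1:ℝ)/2)^n := by ring

lemma sumF2 {y : ℝ} (hy : |y| ≤ 1/2) :
    Summable (fun n : ℕ => ((n:ℝ)+2) * ((n:ℝ)+1) * cc (n+2) * y ^ n) := by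
  apply Summable.of_norm_bounded sum_n2_geom
  intro n
  rw [Real.norm_eq_abs, abs_mul, abs_mul, abs_mul,
    abs_of_pos (show (0:ℝ) < (n:ℝ)+2 by positivity),
    abs_of_pos (show (0:ℝ) < (n:ℝ)+1 by positivity)]
  calc ((n:ℝ)+2) * ((n:ℝ)+1) * |cc (n+2)| * |y^n|
      ≤ ((n:ℝ)+2) * ((n:ℝ)+1) * 1 * ((1:ℝ)/2)^n := by
        gcongr
        exacts [abs_cc_le_one _, abs_pow_le hy n]
    _ = ((n:ℝ)+2) * ((n:ℝ)+1) * ((1:ℝ)/2)^n := by ring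

/-! ### The hypergeometric ODE for the series -/

lemma odeF {y : ℝ} (hy : |y| ≤ 1/2) :
    y*(1-y)*F2 y + (4/3 - 2*y)*F1 y - 5/36 * F y = 0 := by
  have HS0 : HasSum (fun n : ℕ => cc n * y ^ n) (F y) := (sumF hy).hasSum
  have HS1 : HasSum (fun n : ℕ => ((n:ℝ)+1) * cc (n+1) * y ^ n) (F1 y) := (sumF1 hy).hasSum
  have HS2 : HasSum (fun n : ℕ => ((n:ℝ)+2) * ((n:ℝ)+1) * cc (n+2) * y ^ n) (F2 y) :=
    (sumF2 hy).hasSum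
  have HA : HasSum (fun n : ℕ => ((n:ℝ)+1) * (n:ℝ) * cc (n+1) * y^n) (y * F2 y) := by
    have h := HS2.mul_left y
    have heq : (fun n : ℕ => ((((n+1:ℕ)):ℝ)+1) * (((n+1:ℕ)):ℝ) * cc ((n+1)+1) * y^(n+1))
        = (fun n : ℕ => y * (((n:ℝ)+2) * ((n:ℝ)+1) * cc (n+2) * y ^ n)) := by
      funext n; push_cast; ring
    have h' : HasSum (fun n : ℕ =>
        ((((n+1:ℕ)):ℝ)+1) * (((n+1:ℕ)):ℝ) * cc ((n+1)+1) * y^(n+1)) (y * F2 y) := by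
      rw [heq]; exact h
    have := (hasSum_nat_add_iff (f := fun n : ℕ => ((n:ℝ)+1) * (n:ℝ) * cc (n+1) * y^n) 1).mp h'
    simpa using this
  have HB : HasSum (fun n : ℕ => (n:ℝ) * ((n:ℝ)-1) * cc n * y^n) (y^2 * F2 y) := by
    have h := HS2.mul_left (y^2)
    have heq : (fun n : ℕ => (((n+2:ℕ)):ℝ) * ((((n+2:ℕ)):ℝ)-1) * cc (n+2) * y^(n+2))
        = (fun n : ℕ => y^2 * (((n:ℝ)+2) * ((n:ℝ)+1) * cc (n+2) * y ^ n)) := by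
      funext n; push_cast; ring
    have h' : HasSum (fun n : ℕ =>
        (((n+2:ℕ)):ℝ) * ((((n+2:ℕ)):ℝ)-1) * cc (n+2) * y^(n+2)) (y^2 * F2 y) := by
      rw [heq]; exact h
    have := (hasSum_nat_add_iff (f := fun n : ℕ => (n:ℝ) * ((n:ℝ)-1) * cc n * y^n) 2).mp h'
    simpa [Finset.sum_range_succ] using this
  have HC : HasSum (fun n : ℕ => (n:ℝ) * cc n * y^n) (y * F1 y) := by
    have h := HS1.mul_left y
    have heq : (fun n : ℕ => (((n+1:ℕ)):ℝ) * cc (n+1) * y^(n+1))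
        = (fun n : ℕ => y * (((n:ℝ)+1) * cc (n+1) * y ^ n)) := by
      funext n; push_cast; ring
    have h' : HasSum (fun n : ℕ => (((n+1:ℕ)):ℝ) * cc (n+1) * y^(n+1)) (y * F1 y) := by
      rw [heq]; exact h
    have := (hasSum_nat_add_iff (f := fun n : ℕ => (n:ℝ) * cc n * y^n) 1).mp h'
    simpa using this
  have TOT := ((HA.sub HB).add ((HS1.mul_left (4/3)).sub (HC.mul_left 2))).sub
    (HS0.mul_left (5/36))
  have hzero : (fun n : ℕ =>
      (((n:ℝ)+1) * (n:ℝ) * cc (n+1) * y^n - (n:ℝ) * ((n:ℝ)-1) * cc n * y^n) +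
        ((4/3) * (((n:ℝ)+1) * cc (n+1) * y ^ n) - 2 * ((n:ℝ) * cc n * y^n)) -
        (5/36) * (cc n * y ^ n)) = (fun _ : ℕ => (0:ℝ)) := by
    funext n
    linear_combination y^n * cc_rec n
  rw [hzero] at TOT
  have h0 : ((y * F2 y - y^2 * F2 y) + ((4/3) * F1 y - 2 * (y * F1 y)) - (5/36) * F y) = 0 :=
    TOT.unique hasSum_zero
  linear_combination h0

/-! ### Termwise derivatives -/

lemma deriv_bound {y : ℝ} (hy : |y| ≤ 1/2) (n : ℕ) :
    ‖cc n * ((n:ℝ) * y ^ (n-1))‖ ≤ 2 * (((n:ℝ)+1) * ((1:ℝ)/2)^n) := by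
  match n with
  | 0 => simp
  | (m+1) =>
    rw [Real.norm_eq_abs, abs_mul, abs_mul, Nat.add_sub_cancel,
      abs_of_pos (show (0:ℝ) < ((m+1:ℕ):ℝ) by positivity)]
    push_cast
    have h1 : |cc (m+1)| * (((m:ℝ)+1) * |y ^ m|) ≤ 1 * (((m:ℝ)+1) * ((1:ℝ)/2)^m) := by
      gcongr
      exacts [abs_cc_le_one _, abs_pow_le hy m]
    calc |cc (m+1)| * (((m:ℝ)+1) * |y^m|) ≤ 1 * (((m:ℝ)+1) * ((1:ℝ)/2)^m) := h1
      _ ≤ 2 * (((m:ℝ)+1+1) * ((1:ℝ)/2)^(m+1)) := by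
          rw [pow_succ]
          nlinarith [pow_pos (show (0:ℝ) < 1/2 by norm_num) m, Nat.cast_nonneg (α := ℝ) m]

lemma deriv_bound1 {y : ℝ} (hy : |y| ≤ 1/2) (n : ℕ) :
    ‖((n:ℝ)+1) * cc (n+1) * ((n:ℝ) * y ^ (n-1))‖
      ≤ 2 * (((n:ℝ)+2) * ((n:ℝ)+1) * ((1:ℝ)/2)^n) := by
  match n with
  | 0 => norm_num
  | (m+1) =>
    rw [Real.norm_eq_abs, abs_mul, abs_mul, abs_mul, Nat.add_sub_cancel]
    push_cast
    rw [abs_of_pos (show (0:ℝ) < (m:ℝ)+1+1 by positivity),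
      abs_of_pos (show (0:ℝ) < (m:ℝ)+1 by positivity)]
    have h1 : ((m:ℝ)+1+1) * |cc (m+2)| * (((m:ℝ)+1) * |y ^ m|)
        ≤ ((m:ℝ)+1+1) * 1 * (((m:ℝ)+1) * ((1:ℝ)/2)^m) := by
      gcongr
      · exact abs_cc_le_one _
      · exact abs_pow_le hy m
    have h2 : ((m:ℝ)+1+1) * 1 * (((m:ℝ)+1) * ((1:ℝ)/2)^m)
        ≤ 2 * (((m:ℝ)+1+2) * ((m:ℝ)+1+1) * ((1:ℝ)/2)^(m+1)) := by
      rw [pow_succ]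
      nlinarith [pow_pos (show (0:ℝ) < 1/2 by norm_num) m, Nat.cast_nonneg (α := ℝ) m]
    calc ((m:ℝ)+1+1) * |cc (m+1+1)| * (((m:ℝ)+1) * |y ^ m|)
        ≤ ((m:ℝ)+1+1) * 1 * (((m:ℝ)+1) * ((1:ℝ)/2)^m) := h1
      _ ≤ 2 * (((m:ℝ)+1+2) * ((m:ℝ)+1+1) * ((1:ℝ)/2)^(m+1)) := h2

lemma hasDerivAt_F {y : ℝ} (hy : |y| < 1/2) : HasDerivAt F (F1 y) y := by
  have hmem : y ∈ Ioo (-(1/2):ℝ) (1/2) := abs_lt.mp hy |> fun ⟨h1, h2⟩ => ⟨h1, h2⟩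
  have key : HasDerivAt (fun z => ∑' n : ℕ, cc n * z ^ n)
      (∑' n : ℕ, cc n * ((n:ℝ) * y ^ (n-1))) y := by
    apply hasDerivAt_tsum_of_isPreconnected
      (u := fun n : ℕ => 2 * (((n:ℝ)+1) * ((1:ℝ)/2)^n))
      (sum_n_geom.mul_left 2) isOpen_Ioo (convex_Ioo _ _).isPreconnected
      (fun n z _ => (hasDerivAt_pow n z).const_mul (cc n))
      (fun n z hz => deriv_bound (by rw [abs_le]; exact ⟨hz.1.le, hz.2.le⟩) n)
      (show (0:ℝ) ∈ Ioo (-(1/2):ℝ) (1/2) by norm_num) ?_ hmem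
    · apply Summable.of_norm_bounded sum_geom
      intro n
      rw [Real.norm_eq_abs, abs_mul]
      calc |cc n| * |(0:ℝ)^n| ≤ 1 * ((1:ℝ)/2)^n := by
            gcongr
            exacts [abs_cc_le_one n, abs_pow_le (by norm_num) n]
        _ = _ := one_mul _
  have hsum : Summable (fun n : ℕ => cc n * ((n:ℝ) * y ^ (n-1))) :=
    Summable.of_norm_bounded (sum_n_geom.mul_left 2) (deriv_bound (le_of_lt hy))
  have heq : (∑' n : ℕ, cc n * ((n:ℝ) * y ^ (n-1))) = F1 y := by
    rw [hsum.tsum_eq_zero_add]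
    simp only [Nat.cast_zero, zero_mul, mul_zero, zero_add]
    apply tsum_congr
    intro n
    push_cast [Nat.add_sub_cancel]
    ring
  rw [← heq]
  exact key

lemma hasDerivAt_F1 {y : ℝ} (hy : |y| < 1/2) : HasDerivAt F1 (F2 y) y := by
  have hmem : y ∈ Ioo (-(1/2):ℝ) (1/2) := abs_lt.mp hy |> fun ⟨h1, h2⟩ => ⟨h1, h2⟩
  have key : HasDerivAt (fun z => ∑' n : ℕ, ((n:ℝ)+1) * cc (n+1) * z ^ n)
      (∑' n : ℕ, ((n:ℝ)+1) * cc (n+1) * ((n:ℝ) * y ^ (n-1))) y := by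
    apply hasDerivAt_tsum_of_isPreconnected
      (u := fun n : ℕ => 2 * (((n:ℝ)+2) * ((n:ℝ)+1) * ((1:ℝ)/2)^n))
      (sum_n2_geom.mul_left 2) isOpen_Ioo (convex_Ioo _ _).isPreconnected
      (fun n z _ => (hasDerivAt_pow n z).const_mul (((n:ℝ)+1) * cc (n+1)))
      (fun n z hz => deriv_bound1 (by rw [abs_le]; exact ⟨hz.1.le, hz.2.le⟩) n)
      (show (0:ℝ) ∈ Ioo (-(1/2):ℝ) (1/2) by norm_num) ?_ hmem
    · apply Summable.of_norm_bounded sum_n_geom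
      intro n
      rw [Real.norm_eq_abs, abs_mul, abs_mul,
        abs_of_pos (show (0:ℝ) < (n:ℝ)+1 by positivity)]
      calc ((n:ℝ)+1) * |cc (n+1)| * |(0:ℝ)^n| ≤ ((n:ℝ)+1) * 1 * ((1:ℝ)/2)^n := by
            gcongr
            exacts [abs_cc_le_one _, abs_pow_le (by norm_num) n]
        _ = _ := by ring
  have hsum : Summable (fun n : ℕ => ((n:ℝ)+1) * cc (n+1) * ((n:ℝ) * y ^ (n-1))) :=
    Summable.of_norm_bounded (sum_n2_geom.mul_left 2) (deriv_bound1 (le_of_lt hy))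
  have heq : (∑' n : ℕ, ((n:ℝ)+1) * cc (n+1) * ((n:ℝ) * y ^ (n-1))) = F2 y := by
    rw [hsum.tsum_eq_zero_add]
    simp only [Nat.cast_zero, zero_mul, mul_zero, zero_add]
    apply tsum_congr
    intro n
    push_cast [Nat.add_sub_cancel]
    ring
  rw [← heq]
  exact key

lemma F_zero : F 0 = 1 := by
  have h : F 0 = cc 0 * (0:ℝ)^0 := tsum_eq_single 0 (fun n hn => by simp [zero_pow hn])
  rw [h, cc_zero]; norm_num

lemma F1_zero : F1 0 = 5/48 := by
  have h : F1 0 = (((0:ℕ):ℝ)+1) * cc (0+1) * (0:ℝ)^0 :=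
    tsum_eq_single 0 (fun n hn => by simp [zero_pow hn])
  rw [h]; rw [show (0+1 : ℕ) = 1 from rfl, cc_one]; norm_num

/-! ### The algebraic side -/

noncomputable def Z (x : ℝ) : ℝ := x * (x + 2)^3 / (2*x + 1)^3
noncomputable def Zp (x : ℝ) : ℝ := 2*(x+2)^2*(x-1)^2 / (2*x+1)^4
noncomputable def Zpp (x : ℝ) : ℝ := 36*(x+2)*(x-1) / (2*x+1)^5
noncomputable def Lf (x : ℝ) : ℝ := 1/(1+2*x) + 1/(3*(1+x)) - 1/(2+x)
noncomputable def Lq (x : ℝ) : ℝ := -2/(1+2*x)^2 - 1/(3*(1+x)^2) + 1/(2+x)^2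
noncomputable def fs (x : ℝ) : ℝ :=
  (1 / (1 + x/2)) * (1 + 2*x) ^ ((1 : ℝ)/2) * (1 + x) ^ ((1 : ℝ)/3)
noncomputable def fs1 (x : ℝ) : ℝ := fs x * Lf x
noncomputable def fs2 (x : ℝ) : ℝ := fs x * ((Lf x)^2 + Lq x)

variable {x : ℝ}

lemma hden (hx : |x| < 1/100) : (0:ℝ) < 2*x+1 := by
  rcases abs_lt.mp hx with ⟨h1, h2⟩; linarith

lemma h1x (hx : |x| < 1/100) : (0:ℝ) < 1+x := by
  rcases abs_lt.mp hx with ⟨h1, h2⟩; linarith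

lemma h12x (hx : |x| < 1/100) : (0:ℝ) < 1+2*x := by
  rcases abs_lt.mp hx with ⟨h1, h2⟩; linarith

lemma h2x (hx : |x| < 1/100) : (0:ℝ) < 2+x := by
  rcases abs_lt.mp hx with ⟨h1, h2⟩; linarith

lemma hhalf (hx : |x| < 1/100) : (0:ℝ) < 1+x/2 := by
  rcases abs_lt.mp hx with ⟨h1, h2⟩; linarith

lemma hx2 (hx : |x| < 1/100) : (0:ℝ) < x+2 := by
  rcases abs_lt.mp hx with ⟨h1, h2⟩; linarith

lemma hx1 (hx : |x| < 1/100) : x - 1 < 0 := by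
  rcases abs_lt.mp hx with ⟨h1, h2⟩; linarith

lemma Zp_pos (hx : |x| < 1/100) : 0 < Zp x := by
  have h1 := hden hx
  have h2 := hx2 hx
  have h3 := hx1 hx
  unfold Zp
  apply div_pos
  · have : (0:ℝ) < (x-1)^2 := by nlinarith
    positivity
  · positivity

lemma Zabs (hx : |x| < 1/100) : |Z x| < 1/2 := by
  have h1 := hden hx
  have h2 := hx2 hx
  rcases abs_lt.mp hx with ⟨ha, hb⟩
  unfold Z
  rw [abs_div, abs_mul, abs_of_pos (show (0:ℝ) < (x+2)^3 by positivity),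
    abs_of_pos (show (0:ℝ) < (2*x+1)^3 by positivity), div_lt_iff₀ (by positivity)]
  calc |x| * (x+2)^3 < (1/100) * (201/100)^3 := by
        apply mul_lt_mul'' hx (pow_lt_pow_left₀ (by linarith) (by linarith) (by norm_num))
          (abs_nonneg x) (by positivity)
    _ ≤ 1/2 * (2*x+1)^3 := by
        have h3 : ((98:ℝ)/100)^3 ≤ (2*x+1)^3 := pow_le_pow_left₀ (by norm_num) (by linarith) 3
        nlinarith

lemma Zsub (hx : |x| < 1/100) : 0 < 1 - Z x := by
  have := Zabs hx
  rcases abs_lt.mp this with ⟨h1, h2⟩; linarith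

lemma Z_pos_of_pos (hx : |x| < 1/100) (h : 0 < x) : 0 < Z x := by
  have h1 := hden hx
  have h2 := hx2 hx
  unfold Z
  positivity

lemma Z_neg_of_neg (hx : |x| < 1/100) (h : x < 0) : Z x < 0 := by
  have h1 := hden hx
  have h2 := hx2 hx
  unfold Z
  apply div_neg_of_neg_of_pos
  · exact mul_neg_of_neg_of_pos h (by positivity)
  · positivity

lemma Z_ne (hx : |x| < 1/100) (h : x ≠ 0) : Z x ≠ 0 := by
  rcases h.lt_or_gt with h | h
  · exact ne_of_lt (Z_neg_of_neg hx h)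
  · exact ne_of_gt (Z_pos_of_pos hx h)

lemma Z_zero : Z 0 = 0 := by simp [Z]

lemma hasDerivAt_Z (hx : |x| < 1/100) : HasDerivAt Z (Zp x) x := by
  have hd : ((2*x+1)^3 : ℝ) ≠ 0 := by have := hden hx; positivity
  have h1 : HasDerivAt (fun x : ℝ => x*(x+2)^3) ((x+2)^3 + x*(3*(x+2)^2)) x := by
    have ha : HasDerivAt (fun x : ℝ => (x+2)^3) (3*(x+2)^2) x := by
      simpa using ((hasDerivAt_id x).add_const 2).fun_pow 3
    simpa using (hasDerivAt_id x).fun_mul ha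
  have h2 : HasDerivAt (fun x : ℝ => (2*x+1)^3) (3*(2*x+1)^2*2) x := by
    have hb : HasDerivAt (fun x : ℝ => 2*x+1) 2 x := by
      simpa using ((hasDerivAt_id x).const_mul 2).add_const 1
    simpa [mul_comm] using hb.fun_pow 3
  have := h1.div h2 hd
  refine this.congr_deriv (Eq.symm ?_)
  unfold Zp
  have := hden hx
  field_simp
  ring

lemma hasDerivAt_Zp (hx : |x| < 1/100) : HasDerivAt Zp (Zpp x) x := by
  have hd : ((2*x+1)^4 : ℝ) ≠ 0 := by have := hden hx; positivity
  have h1 : HasDerivAt (fun x : ℝ => 2*(x+2)^2*(x-1)^2)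
      (2*(2*(x+2))*(x-1)^2 + 2*(x+2)^2*(2*(x-1))) x := by
    have ha : HasDerivAt (fun x : ℝ => 2*(x+2)^2) (2*(2*(x+2))) x := by
      simpa using (((hasDerivAt_id x).add_const 2).fun_pow 2).const_mul 2
    have hb : HasDerivAt (fun x : ℝ => (x-1)^2) (2*(x-1)) x := by
      simpa using (((hasDerivAt_id x).sub_const 1).fun_pow 2)
    simpa using ha.fun_mul hb
  have h2 : HasDerivAt (fun x : ℝ => (2*x+1)^4) (4*(2*x+1)^3*2) x := by
    have hb : HasDerivAt (fun x : ℝ => 2*x+1) 2 x := by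
      simpa using ((hasDerivAt_id x).const_mul 2).add_const 1
    simpa [mul_comm] using hb.fun_pow 4
  have := h1.div h2 hd
  refine this.congr_deriv (Eq.symm ?_)
  unfold Zpp
  have := hden hx
  field_simp
  ring

lemma hasDerivAt_Lf (hx : |x| < 1/100) : HasDerivAt Lf (Lq x) x := by
  have e1 := h12x hx
  have e2 := h1x hx
  have e3 := h2x hx
  have h1 : HasDerivAt (fun x : ℝ => 1/(1+2*x)) (-2/(1+2*x)^2) x := by
    have hb : HasDerivAt (fun x : ℝ => 1+2*x) 2 x := by
      simpa using ((hasDerivAt_id x).const_mul 2).const_add 1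
    have := (hasDerivAt_const x (1:ℝ)).div hb (ne_of_gt e1)
    refine this.congr_deriv (Eq.symm ?_)
    field_simp
    ring
  have h2 : HasDerivAt (fun x : ℝ => 1/(3*(1+x))) (-1/(3*(1+x)^2)) x := by
    have hb : HasDerivAt (fun x : ℝ => 3*(1+x)) 3 x := by
      simpa using (((hasDerivAt_id x).const_add 1).const_mul 3)
    have := (hasDerivAt_const x (1:ℝ)).div hb (by positivity)
    refine this.congr_deriv (Eq.symm ?_)
    field_simp
    ring
  have h3 : HasDerivAt (fun x : ℝ => 1/(2+x)) (-1/(2+x)^2) x := by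
    have hb : HasDerivAt (fun x : ℝ => 2+x) 1 x := by
      simpa using ((hasDerivAt_id x).const_add 2)
    have := (hasDerivAt_const x (1:ℝ)).div hb (ne_of_gt e3)
    refine this.congr_deriv (Eq.symm ?_)
    field_simp
    ring
  have := (h1.add h2).sub h3
  refine this.congr_deriv (Eq.symm ?_)
  unfold Lq
  ring

lemma hasDerivAt_S (hx : |x| < 1/100) :
    HasDerivAt (fun y : ℝ => (1 + 2*y) ^ ((1:ℝ)/2)) ((1+2*x) ^ ((1:ℝ)/2) / (1+2*x)) x := by
  have e1 := h12x hx
  have hlin : HasDerivAt (fun y : ℝ => 1+2*y) 2 x := by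
    simpa using ((hasDerivAt_id x).const_mul 2).const_add 1
  have h := (Real.hasDerivAt_rpow_const (x := 1+2*x) (p := (1:ℝ)/2)
    (Or.inl (ne_of_gt e1))).comp x hlin
  refine h.congr_deriv (Eq.symm ?_)
  rw [show ((1:ℝ)/2 - 1) = ((1:ℝ)/2) - 1 from rfl, Real.rpow_sub e1, Real.rpow_one]
  field_simp

lemma hasDerivAt_T (hx : |x| < 1/100) :
    HasDerivAt (fun y : ℝ => (1 + y) ^ ((1:ℝ)/3)) ((1+x) ^ ((1:ℝ)/3) / (3*(1+x))) x := by
  have e2 := h1x hx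
  have hlin : HasDerivAt (fun y : ℝ => 1+y) 1 x := by
    simpa using (hasDerivAt_id x).const_add 1
  have h := (Real.hasDerivAt_rpow_const (x := 1+x) (p := (1:ℝ)/3)
    (Or.inl (ne_of_gt e2))).comp x hlin
  refine h.congr_deriv (Eq.symm ?_)
  rw [Real.rpow_sub e2, Real.rpow_one]
  field_simp

lemma hasDerivAt_fs (hx : |x| < 1/100) : HasDerivAt fs (fs1 x) x := by
  have e1 := h12x hx
  have e2 := h1x hx
  have e3 := h2x hx
  have e4 := hhalf hx
  have hd : HasDerivAt (fun y : ℝ => 1/(1+y/2)) (-(1/2)/(1+x/2)^2) x := by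
    have hb : HasDerivAt (fun y : ℝ => 1+y/2) (1/2) x := by
      simpa using ((hasDerivAt_id x).div_const 2).const_add 1
    have := (hasDerivAt_const x (1:ℝ)).div hb (ne_of_gt e4)
    refine this.congr_deriv (Eq.symm ?_)
    field_simp
    ring
  have h := (hd.mul (hasDerivAt_S hx)).mul (hasDerivAt_T hx)
  refine h.congr_deriv (Eq.symm ?_)
  unfold fs1 fs Lf
  simp only [Pi.mul_apply]
  set S := (1+2*x) ^ ((1:ℝ)/2)
  set T := (1+x) ^ ((1:ℝ)/3)
  have e9 : (1+x*2:ℝ) ≠ 0 := by linarith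
  field_simp
  ring

lemma hasDerivAt_fs1 (hx : |x| < 1/100) : HasDerivAt fs1 (fs2 x) x := by
  have h := (hasDerivAt_fs hx).mul (hasDerivAt_Lf hx)
  refine h.congr_deriv (Eq.symm ?_)
  unfold fs2 fs1
  ring


noncomputable def g (x : ℝ) : ℝ := F (Z x)
noncomputable def g1 (x : ℝ) : ℝ := F1 (Z x) * Zp x
noncomputable def g2 (x : ℝ) : ℝ := F2 (Z x) * (Zp x)^2 + F1 (Z x) * Zpp x
noncomputable def Aq (x : ℝ) : ℝ := Z x * (1 - Z x) * Zp x
noncomputable def Bq (x : ℝ) : ℝ := -(Z x)*(1-Z x)*Zpp x + (4/3-2*Z x)*(Zp x)^2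
noncomputable def Cq (x : ℝ) : ℝ := -(5/36)*(Zp x)^3
noncomputable def Mf (x : ℝ) : ℝ := (4/3)*Zp x/Z x - (2/3)*Zp x/(1-Z x) - Zpp x/Zp x
noncomputable def Wf (x : ℝ) : ℝ := g x * fs1 x - fs x * g1 x
noncomputable def Ef (x : ℝ) : ℝ := |Z x| ^ ((4:ℝ)/3) * (1 - Z x) ^ ((2:ℝ)/3) / Zp x
noncomputable def Vf (x : ℝ) : ℝ := Wf x * Ef x

variable {x : ℝ}

lemma fod (hx : |x| < 1/100) : Aq x * fs2 x + Bq x * fs1 x + Cq x * fs x = 0 := by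
  have e1 := h12x hx
  have e2 := h1x hx
  have e3 := h2x hx
  have e4 : (2*x+1:ℝ) ≠ 0 := by have := hden hx; linarith
  have e8 : (x*2+1:ℝ) ≠ 0 := by linarith
  have e9 : (1+x*2:ℝ) ≠ 0 := by linarith
  have key : Aq x * ((Lf x)^2 + Lq x) + Bq x * Lf x + Cq x = 0 := by
    unfold Aq Bq Cq Z Zp Zpp Lf Lq
    field_simp
    ring
  unfold fs2 fs1
  linear_combination fs x * key

lemma god (hx : |x| < 1/100) : Aq x * g2 x + Bq x * g1 x + Cq x * g x = 0 := by
  have h := odeF (Zabs hx).le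
  unfold g g1 g2 Aq Bq Cq
  linear_combination (Zp x)^3 * h

lemma hasDerivAt_g (hx : |x| < 1/100) : HasDerivAt g (g1 x) x := by
  have h := (hasDerivAt_F (Zabs hx)).comp x (hasDerivAt_Z hx)
  exact h

lemma hasDerivAt_g1 (hx : |x| < 1/100) : HasDerivAt g1 (g2 x) x := by
  have h1 := (hasDerivAt_F1 (Zabs hx)).comp x (hasDerivAt_Z hx)
  have h1' : HasDerivAt (fun y => F1 (Z y)) (F2 (Z x) * Zp x) x := by
    exact h1
  have h := h1'.mul (hasDerivAt_Zp hx)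
  refine h.congr_deriv (Eq.symm ?_)
  unfold g2
  ring

lemma hasDerivAt_W (hx : |x| < 1/100) :
    HasDerivAt Wf (g x * fs2 x - fs x * g2 x) x := by
  have h := ((hasDerivAt_g hx).mul (hasDerivAt_fs1 hx)).sub
    ((hasDerivAt_fs hx).mul (hasDerivAt_g1 hx))
  refine h.congr_deriv (Eq.symm ?_)
  ring

lemma Ef_contAt (hx : |x| < 1/100) : ContinuousAt Ef x := by
  have hZc : ContinuousAt Z x := (hasDerivAt_Z hx).continuousAt
  have h1 : ContinuousAt (fun y => |Z y| ^ ((4:ℝ)/3)) x :=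
    hZc.abs.rpow_const (Or.inr (by norm_num))
  have h2 : ContinuousAt (fun y => (1 - Z y) ^ ((2:ℝ)/3)) x :=
    (continuousAt_const.sub hZc).rpow_const (Or.inr (by norm_num))
  exact (h1.mul h2).div (hasDerivAt_Zp hx).continuousAt (ne_of_gt (Zp_pos hx))

lemma Ef_zero : Ef 0 = 0 := by
  simp [Ef, Z_zero, Real.zero_rpow (show ((4:ℝ)/3) ≠ 0 by norm_num)]

lemma Ef_pos (hx : |x| < 1/100) (hne : x ≠ 0) : 0 < Ef x :=
  div_pos (mul_pos (Real.rpow_pos_of_pos (abs_pos.mpr (Z_ne hx hne)) _)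
    (Real.rpow_pos_of_pos (Zsub hx) _)) (Zp_pos hx)

lemma habs (hx : |x| < 1/100) (hne : x ≠ 0) :
    HasDerivAt (fun y => |Z y| ^ ((4:ℝ)/3))
      ((4:ℝ)/3 * |Z x| ^ ((4:ℝ)/3) / Z x * Zp x) x := by
  rcases hne.lt_or_gt with hneg | hpos
  · have hzx := Z_neg_of_neg hx hneg
    have hev : (fun y => |Z y| ^ ((4:ℝ)/3)) =ᶠ[nhds x] (fun y => (-Z y) ^ ((4:ℝ)/3)) := by
      have hmem : Z ⁻¹' (Set.Iio 0) ∈ nhds x :=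
        (hasDerivAt_Z hx).continuousAt.preimage_mem_nhds (Iio_mem_nhds hzx)
      filter_upwards [hmem] with y hy
      rw [abs_of_neg hy]
    have hD : HasDerivAt (fun y => (-Z y) ^ ((4:ℝ)/3))
        (((4:ℝ)/3) * (-Z x) ^ ((4:ℝ)/3 - 1) * (-Zp x)) x := by
      have := (Real.hasDerivAt_rpow_const (x := -Z x) (p := (4:ℝ)/3)
        (Or.inl (by simpa using ne_of_gt (neg_pos.mpr hzx)))).comp x (hasDerivAt_Z hx).neg
      exact this.congr_deriv (by ring)
    have := hD.congr_of_eventuallyEq hev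
    refine this.congr_deriv (Eq.symm ?_)
    rw [abs_of_neg hzx, Real.rpow_sub (neg_pos.mpr hzx), Real.rpow_one]
    field_simp
  · have hzx := Z_pos_of_pos hx hpos
    have hev : (fun y => |Z y| ^ ((4:ℝ)/3)) =ᶠ[nhds x] (fun y => (Z y) ^ ((4:ℝ)/3)) := by
      have hmem : Z ⁻¹' (Set.Ioi 0) ∈ nhds x :=
        (hasDerivAt_Z hx).continuousAt.preimage_mem_nhds (Ioi_mem_nhds hzx)
      filter_upwards [hmem] with y hy
      rw [abs_of_pos hy]
    have hD : HasDerivAt (fun y => (Z y) ^ ((4:ℝ)/3))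
        (((4:ℝ)/3) * (Z x) ^ ((4:ℝ)/3 - 1) * Zp x) x :=
      (Real.hasDerivAt_rpow_const (x := Z x) (p := (4:ℝ)/3)
        (Or.inl (ne_of_gt hzx))).comp x (hasDerivAt_Z hx)
    have := hD.congr_of_eventuallyEq hev
    refine this.congr_deriv (Eq.symm ?_)
    rw [abs_of_pos hzx, Real.rpow_sub hzx, Real.rpow_one]
    field_simp

lemma hasDerivAt_Ef (hx : |x| < 1/100) (hne : x ≠ 0) :
    HasDerivAt Ef (Ef x * Mf x) x := by
  have hZne := Z_ne hx hne
  have hZs := ne_of_gt (Zsub hx)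
  have hZpne := ne_of_gt (Zp_pos hx)
  have h1 := habs hx hne
  have h2 : HasDerivAt (fun y => (1 - Z y) ^ ((2:ℝ)/3))
      ((2:ℝ)/3 * (1-Z x) ^ ((2:ℝ)/3) / (1 - Z x) * (-Zp x)) x := by
    have hD := (Real.hasDerivAt_rpow_const (x := 1 - Z x) (p := (2:ℝ)/3)
      (Or.inl hZs)).comp x ((hasDerivAt_Z hx).const_sub 1)
    refine hD.congr_deriv (Eq.symm ?_)
    rw [Real.rpow_sub (Zsub hx), Real.rpow_one]
    field_simp
  have h := (h1.mul h2).div (hasDerivAt_Zp hx) hZpne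
  refine h.congr_deriv (Eq.symm ?_)
  unfold Ef Mf
  set P := |Z x| ^ ((4:ℝ)/3) with hP
  set Q := (1 - Z x) ^ ((2:ℝ)/3) with hQ
  simp only [Pi.mul_apply]
  field_simp
  ring

lemma hAM (hx : |x| < 1/100) (hne : x ≠ 0) : Aq x * Mf x = Bq x := by
  have h1 := Z_ne hx hne
  have h2 := ne_of_gt (Zsub hx)
  have h3 := ne_of_gt (Zp_pos hx)
  unfold Aq Bq Mf
  field_simp
  ring

lemma hAWBW (hx : |x| < 1/100) :
    Aq x * (g x * fs2 x - fs x * g2 x) + Bq x * Wf x = 0 := by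
  unfold Wf
  linear_combination g x * fod hx - fs x * god hx

lemma hasDerivAt_Vf (hx : |x| < 1/100) (hne : x ≠ 0) : HasDerivAt Vf 0 x := by
  have hW := hasDerivAt_W hx
  have hE := hasDerivAt_Ef hx hne
  have h := hW.mul hE
  have hAne : Aq x ≠ 0 := by
    unfold Aq
    exact mul_ne_zero (mul_ne_zero (Z_ne hx hne) (ne_of_gt (Zsub hx))) (ne_of_gt (Zp_pos hx))
  have hval : (g x * fs2 x - fs x * g2 x) * Ef x + Wf x * (Ef x * Mf x) = 0 := by
    have key : Aq x * ((g x * fs2 x - fs x * g2 x) * Ef x + Wf x * (Ef x * Mf x)) = 0 := by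
      linear_combination Ef x * hAWBW hx + Wf x * Ef x * hAM hx hne
    exact (mul_eq_zero.mp key).resolve_left hAne
  exact hval ▸ h

lemma fs_pos (hx : |x| < 1/100) : 0 < fs x := by
  have e1 := h12x hx
  have e2 := h1x hx
  have e4 := hhalf hx
  unfold fs
  positivity

lemma fs_zero : fs 0 = 1 := by norm_num [fs, Real.one_rpow]

lemma fs1_zero : fs1 0 = 5/6 := by norm_num [fs1, fs_zero, Lf]

lemma g_zero : g 0 = 1 := by rw [g, Z_zero, F_zero]

lemma g1_zero : g1 0 = 5/6 := by rw [g1, Z_zero, F1_zero]; norm_num [Zp]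

lemma Wf_zero : Wf 0 = 0 := by rw [Wf, g_zero, fs1_zero, fs_zero, g1_zero]; norm_num

lemma Vf_zero : Vf 0 = 0 := by rw [Vf, Wf_zero, zero_mul]

lemma V_right0 : HasDerivWithinAt Vf 0 (Set.Ici 0) 0 := by
  have hx0 : |(0:ℝ)| < 1/100 := by norm_num
  rw [hasDerivWithinAt_iff_tendsto_slope]
  have hWd := hasDerivAt_W hx0
  have h1 : Filter.Tendsto (slope Wf 0) (nhdsWithin 0 (Set.Ici 0 \ {0}))
      (nhds (g 0 * fs2 0 - fs 0 * g2 0)) :=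
    (hasDerivAt_iff_tendsto_slope.mp hWd).mono_left (nhdsWithin_mono _ (fun y hy => hy.2))
  have h2 : Filter.Tendsto Ef (nhdsWithin 0 (Set.Ici 0 \ {0})) (nhds 0) := by
    have := (Ef_contAt hx0).tendsto
    rw [Ef_zero] at this
    exact this.mono_left nhdsWithin_le_nhds
  have h3 := h1.mul h2
  rw [mul_zero] at h3
  apply h3.congr
  intro y
  simp only [slope, Vf, Wf_zero, Ef_zero, vsub_eq_sub, sub_zero, mul_zero, zero_mul,
    smul_eq_mul]
  ring

lemma W_vanishes (hx : |x| < 1/100) : Wf x = 0 := by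
  rcases lt_trichotomy x 0 with hneg | rfl | hpos
  · have habs : ∀ y ∈ Set.Icc x 0, |y| < 1/100 := by
      intro y hy
      rw [abs_lt]
      rcases abs_lt.mp hx with ⟨ha, hb⟩
      exact ⟨by linarith [hy.1], by linarith [hy.2]⟩
    have key := constant_of_has_deriv_right_zero (f := Vf) (a := x) (b := 0)
      (fun y hy => ((hasDerivAt_W (habs y hy)).continuousAt.mul
        (Ef_contAt (habs y hy))).continuousWithinAt)
      (fun t ht => (hasDerivAt_Vf (habs t ⟨ht.1, ht.2.le⟩) (ne_of_lt ht.2)).hasDerivWithinAt)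
    have h0 := key 0 (Set.right_mem_Icc.mpr hneg.le)
    have hVx : Vf x = 0 := by rw [← h0]; exact Vf_zero
    have hE := Ef_pos hx (ne_of_lt hneg)
    rcases mul_eq_zero.mp hVx with h | h
    · exact h
    · exact absurd h (ne_of_gt hE)
  · exact Wf_zero
  · have habs : ∀ y ∈ Set.Icc 0 x, |y| < 1/100 := by
      intro y hy
      rw [abs_lt]
      rcases abs_lt.mp hx with ⟨ha, hb⟩
      exact ⟨by linarith [hy.1], by linarith [hy.2]⟩
    have key := constant_of_has_deriv_right_zero (f := Vf) (a := 0) (b := x)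
      (fun y hy => ((hasDerivAt_W (habs y hy)).continuousAt.mul
        (Ef_contAt (habs y hy))).continuousWithinAt)
      (fun t ht => by
        rcases eq_or_lt_of_le ht.1 with h0 | h0
        · rw [← h0]; exact V_right0
        · exact (hasDerivAt_Vf (habs t ⟨ht.1, ht.2.le⟩) (ne_of_gt h0)).hasDerivWithinAt)
    have h0 := key x (Set.right_mem_Icc.mpr hpos.le)
    have hVx : Vf x = 0 := by rw [h0]; exact Vf_zero
    have hE := Ef_pos hx (ne_of_gt hpos)
    rcases mul_eq_zero.mp hVx with h | h
    · exact h
    · exact absurd h (ne_of_gt hE)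

noncomputable def qf (x : ℝ) : ℝ := g x / fs x

lemma hasDerivAt_qf (hx : |x| < 1/100) : HasDerivAt qf 0 x := by
  have h := (hasDerivAt_g hx).div (hasDerivAt_fs hx) (ne_of_gt (fs_pos hx))
  have hval : (g1 x * fs x - g x * fs1 x) / (fs x)^2 = 0 := by
    have hw := W_vanishes hx
    have hnum : g1 x * fs x - g x * fs1 x = 0 := by
      unfold Wf at hw; linarith [hw]
    rw [hnum, zero_div]
  exact hval ▸ h

lemma main (hx : |x| < 1/100) : g x = fs x := by
  have hq0 : qf 0 = 1 := by rw [qf, g_zero, fs_zero]; norm_num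
  have hq : qf x = 1 := by
    rcases lt_trichotomy x 0 with hneg | rfl | hpos
    · have habs : ∀ y ∈ Set.Icc x 0, |y| < 1/100 := by
        intro y hy
        rw [abs_lt]
        rcases abs_lt.mp hx with ⟨ha, hb⟩
        exact ⟨by linarith [hy.1], by linarith [hy.2]⟩
      have key := constant_of_has_deriv_right_zero (f := qf) (a := x) (b := 0)
        (fun y hy => (hasDerivAt_qf (habs y hy)).continuousAt.continuousWithinAt)
        (fun t ht => (hasDerivAt_qf (habs t ⟨ht.1, ht.2.le⟩)).hasDerivWithinAt)
      have h0 := key 0 (Set.right_mem_Icc.mpr hneg.le)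
      rw [← h0]
      exact hq0
    · exact hq0
    · have habs : ∀ y ∈ Set.Icc 0 x, |y| < 1/100 := by
        intro y hy
        rw [abs_lt]
        rcases abs_lt.mp hx with ⟨ha, hb⟩
        exact ⟨by linarith [hy.1], by linarith [hy.2]⟩
      have key := constant_of_has_deriv_right_zero (f := qf) (a := 0) (b := x)
        (fun y hy => (hasDerivAt_qf (habs y hy)).continuousAt.continuousWithinAt)
        (fun t ht => (hasDerivAt_qf (habs t ⟨ht.1, ht.2.le⟩)).hasDerivWithinAt)
      have h0 := key x (Set.right_mem_Icc.mpr hpos.le)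
      rw [h0]
      exact hq0
  have := hq
  rw [qf, div_eq_one_iff_eq (ne_of_gt (fs_pos hx))] at this
  exact this


end Stmt5Aux

theorem stmt5 : ∃ ε > 0, ∀ x : ℝ, |x| < ε →
    hypgeo (1/6) (5/6) (4/3) (x * (x + 2)^3 / (2*x + 1)^3) =
      (1 / (1 + x/2)) * (1 + 2*x) ^ ((1 : ℝ)/2) * (1 + x) ^ ((1 : ℝ)/3) := by
  refine ⟨1/100, by norm_num, fun x hx => ?_⟩
  have e1 : hypgeo (1/6) (5/6) (4/3) (x * (x + 2)^3 / (2*x + 1)^3) = Stmt5Aux.g x := rfl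
  have e2 : (1 / (1 + x/2)) * (1 + 2*x) ^ ((1 : ℝ)/2) * (1 + x) ^ ((1 : ℝ)/3)
      = Stmt5Aux.fs x := rfl
  rw [e1, e2]
  exact Stmt5Aux.main hx
end

section
/- There exists ε > 0 such that for all real x with |x| < ε, F(1/6, -1/6; 1/3; x(x+2)^3 / (2x+1)^3) = (1+2x)^(-1/2) · (1+x)^(1/3). -/
open Real Filter Topology Set

namespace Stmt6


noncomputable def A (n : ℕ) : ℝ :=
  (∏ i ∈ Finset.range n, (1/6 + (i:ℝ))) * (∏ i ∈ Finset.range n, (-1/6 + (i:ℝ))) /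
    ((∏ i ∈ Finset.range n, (1/3 + (i:ℝ))) * (Nat.factorial n))

lemma prodc_pos (n : ℕ) : 0 < ∏ i ∈ Finset.range n, (1/3 + (i:ℝ)) :=
  Finset.prod_pos fun i _ => by positivity

lemma A_zero : A 0 = 1 := by simp [A]

lemma A_rec (n : ℕ) : ((n:ℝ)+1) * (1/3 + (n:ℝ)) * A (n+1) = (1/6 + (n:ℝ)) * (-1/6 + (n:ℝ)) * A n := by
  have hc := (prodc_pos n).ne'
  have hc1 : (1/3 + (n:ℝ)) ≠ 0 := by positivity
  have hf : (Nat.factorial n : ℝ) ≠ 0 := Nat.cast_ne_zero.2 n.factorial_ne_zero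
  simp only [A, Finset.prod_range_succ, Nat.factorial_succ, Nat.cast_mul, Nat.cast_add,
    Nat.cast_one]
  field_simp

lemma A_abs_le (n : ℕ) : |A n| ≤ 1 := by
  induction n with
  | zero => simp [A_zero]
  | succ n ih =>
    have h1 : ((n:ℝ)+1) * (1/3 + (n:ℝ)) > 0 := by positivity
    have h2 : |A (n+1)| = |(1/6 + (n:ℝ)) * (-1/6 + (n:ℝ))| / (((n:ℝ)+1) * (1/3 + (n:ℝ))) * |A n| := by
      have := A_rec n
      have : A (n+1) = (1/6 + (n:ℝ)) * (-1/6 + (n:ℝ)) * A n / (((n:ℝ)+1) * (1/3 + (n:ℝ))) := by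
        field_simp at this ⊢; linarith [this]
      rw [this, abs_div, abs_mul, abs_of_pos h1]
      ring
    rw [h2]
    have h3 : |(1/6 + (n:ℝ)) * (-1/6 + (n:ℝ))| ≤ ((n:ℝ)+1) * (1/3 + (n:ℝ)) := by
      rw [abs_mul]
      have h4 : |(1/6 + (n:ℝ))| = 1/6 + (n:ℝ) := abs_of_pos (by positivity)
      have h5 : |(-1/6 + (n:ℝ))| ≤ 1/6 + (n:ℝ) := by
        rw [abs_le]; constructor <;> [nlinarith [n.cast_nonneg (α := ℝ)]; nlinarith [n.cast_nonneg (α := ℝ)]]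
      calc |(1/6 + (n:ℝ))| * |(-1/6 + (n:ℝ))| ≤ (1/6 + (n:ℝ)) * (1/6 + (n:ℝ)) := by
            rw [h4]; exact mul_le_mul_of_nonneg_left h5 (by positivity)
        _ ≤ ((n:ℝ)+1) * (1/3 + (n:ℝ)) := by nlinarith [n.cast_nonneg (α := ℝ)]
    calc |(1/6 + (n:ℝ)) * (-1/6 + (n:ℝ))| / (((n:ℝ)+1) * (1/3 + (n:ℝ))) * |A n|
        ≤ 1 * |A n| := by
          apply mul_le_mul_of_nonneg_right _ (abs_nonneg _)
          rw [div_le_one h1]; exact h3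
      _ ≤ 1 := by rw [one_mul]; exact ih



lemma summable_aux (k : ℕ) {r : ℝ} (hr : |r| < 1) :
    Summable (fun n : ℕ => ((n:ℝ)+1)^k * |r|^n) := by
  have h1 : ∀ n : ℕ, ((n:ℝ)+1)^k * |r|^n
      = ∑ m ∈ Finset.range (k+1), (k.choose m : ℝ) * ((n:ℝ)^m * |r|^n) := by
    intro n
    rw [add_pow, Finset.sum_mul]
    apply Finset.sum_congr rfl
    intro m _
    ring
  rw [funext h1]
  apply summable_sum
  intro m _
  apply Summable.mul_left
  apply summable_pow_mul_geometric_of_norm_lt_one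
  rwa [Real.norm_eq_abs, abs_abs]

lemma summable_of_le_geo {f : ℕ → ℝ} {k : ℕ} {r : ℝ} (hr : |r| < 1)
    (h : ∀ n, |f n| ≤ ((n:ℝ)+1)^k * |r|^n) : Summable f :=
  Summable.of_norm_bounded (summable_aux k hr) h

lemma key_deriv {c : ℕ → ℝ} (hc : ∀ n, |c n| ≤ ((n:ℝ)+1)^2) {z : ℝ} (hz : |z| < 1/2) :
    HasDerivAt (fun w => ∑' n, c n * w ^ n) (∑' n : ℕ, ((n:ℝ)+1) * c (n+1) * z ^ n) z := by
  have h35 : |(3/5 : ℝ)| < 1 := by rw [abs_of_pos] <;> norm_num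
  set s : Set ℝ := Set.Ioo (-(3/5)) (3/5) with hs
  have hso : IsOpen s := isOpen_Ioo
  have hzs : z ∈ s := by
    constructor <;> [nlinarith [abs_lt.1 hz]; nlinarith [abs_lt.1 hz]]
  have hbound : ∀ (n : ℕ) (x : ℝ), x ∈ s →
      ‖c n * ((n:ℝ) * x ^ (n-1))‖ ≤ ((n:ℝ)+1)^3 * (5/3) * (3/5)^n := by
    intro n x hx
    have hxb : |x| ≤ 3/5 := by
      rw [abs_le]; exact ⟨le_of_lt hx.1, le_of_lt hx.2⟩
    rw [Real.norm_eq_abs, abs_mul, abs_mul, abs_pow]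
    have h1 : |x|^(n-1) ≤ (3/5 : ℝ)^(n-1) := pow_le_pow_left₀ (abs_nonneg x) hxb _
    have h2 : |(n:ℝ)| = (n:ℝ) := abs_of_nonneg n.cast_nonneg
    calc |c n| * (|(n:ℝ)| * |x|^(n-1)) ≤ ((n:ℝ)+1)^2 * ((n:ℝ) * (3/5)^(n-1)) := by
          apply mul_le_mul (hc n) _ (by positivity) (by positivity)
          rw [h2]
          exact mul_le_mul_of_nonneg_left h1 n.cast_nonneg
      _ ≤ ((n:ℝ)+1)^3 * (5/3) * (3/5)^n := by
          rcases Nat.eq_zero_or_pos n with h | h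
          · subst h; norm_num
          · have : (3/5 : ℝ)^(n-1) = (5/3) * (3/5)^n := by
              obtain ⟨m, rfl⟩ := Nat.exists_eq_succ_of_ne_zero h.ne'
              simp only [Nat.succ_sub_one, pow_succ]
              ring
            rw [this]
            have hn1 : (n:ℝ) ≤ (n:ℝ)+1 := by linarith
            nlinarith [pow_nonneg (by norm_num : (0:ℝ) ≤ 3/5) n, n.cast_nonneg (α := ℝ),
              pow_nonneg (by linarith [n.cast_nonneg (α := ℝ)] : (0:ℝ) ≤ (n:ℝ)+1) 2]
  have hsum_u : Summable (fun n : ℕ => ((n:ℝ)+1)^3 * (5/3) * (3/5)^n) := by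
    have := (summable_aux 3 h35).mul_right (5/3)
    refine this.congr (fun n => ?_)
    rw [abs_of_pos (by norm_num : (0:ℝ) < 3/5)]
    ring
  have hf' : TendstoUniformlyOn
      (fun N => fun x => ∑ n ∈ Finset.range N, c n * ((n:ℝ) * x ^ (n-1)))
      (fun x => ∑' n, c n * ((n:ℝ) * x ^ (n-1))) atTop s :=
    tendstoUniformlyOn_tsum_nat hsum_u hbound
  have hf : ∀ (N : ℕ), ∀ x ∈ s, HasDerivAt (fun w => ∑ n ∈ Finset.range N, c n * w ^ n)
      (∑ n ∈ Finset.range N, c n * ((n:ℝ) * x ^ (n-1))) x := by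
    intro N x _
    apply HasDerivAt.fun_sum
    intro i _
    exact (hasDerivAt_pow i x).const_mul (c i)
  have hfg : ∀ x ∈ s, Tendsto (fun N => ∑ n ∈ Finset.range N, c n * x ^ n) atTop
      (𝓝 (∑' n, c n * x ^ n)) := by
    intro x hx
    have hxb : |x| < 1 := by
      rw [abs_lt]; constructor <;> [nlinarith [hx.1]; nlinarith [hx.2]]
    have : Summable (fun n : ℕ => c n * x ^ n) := by
      apply summable_of_le_geo (k := 2) hxb
      intro n
      rw [abs_mul, abs_pow]
      exact mul_le_mul (hc n) le_rfl (by positivity) (by positivity)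
    exact this.hasSum.tendsto_sum_nat
  have main := hasDerivAt_of_tendstoUniformlyOn hso hf'
    (Eventually.of_forall hf) hfg hzs
  have hshift : (∑' n, c n * ((n:ℝ) * z ^ (n-1))) = ∑' n : ℕ, ((n:ℝ)+1) * c (n+1) * z ^ n := by
    have hsum : Summable (fun n : ℕ => c n * ((n:ℝ) * z ^ (n-1))) :=
      Summable.of_norm_bounded hsum_u (fun n => hbound n z hzs)
    rw [Summable.tsum_eq_zero_add hsum]
    simp only [Nat.cast_zero, zero_mul, mul_zero, zero_add]
    apply tsum_congr
    intro n
    simp only [Nat.add_sub_cancel]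
    push_cast
    ring
  rw [hshift] at main
  exact main




lemma summable_of_le_geo' {f : ℕ → ℝ} {C : ℝ} {k : ℕ} {r : ℝ} (hr : |r| < 1)
    (h : ∀ n, |f n| ≤ C * (((n:ℝ)+1)^k * |r|^n)) : Summable f :=
  Summable.of_norm_bounded ((summable_aux k hr).mul_left C) h

noncomputable def F (z : ℝ) : ℝ := ∑' n : ℕ, A n * z ^ n
noncomputable def F1 (z : ℝ) : ℝ := ∑' n : ℕ, ((n:ℝ)+1) * A (n+1) * z ^ n
noncomputable def F2 (z : ℝ) : ℝ := ∑' n : ℕ, ((n:ℝ)+2) * ((n:ℝ)+1) * A (n+2) * z ^ n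

lemma summable_PA {z : ℝ} (hz1 : |z| < 1) (p : ℕ → ℝ) (m : ℕ → ℕ)
    (hp : ∀ n, |p n| ≤ 4*((n:ℝ)+1)^2) :
    Summable (fun n : ℕ => p n * A (m n) * z^n) := by
  apply summable_of_le_geo' (C := 4) (k := 2) hz1
  intro n
  rw [abs_mul, abs_mul, abs_pow]
  have h1 : (0:ℝ) ≤ |z|^n := by positivity
  calc |p n| * |A (m n)| * |z|^n ≤ (4*((n:ℝ)+1)^2) * 1 * |z|^n := by
        apply mul_le_mul_of_nonneg_right _ h1
        exact mul_le_mul (hp n) (A_abs_le _) (abs_nonneg _) (by positivity)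
    _ = 4 * (((n:ℝ)+1)^2 * |z|^n) := by ring

lemma shift_tsum {f : ℕ → ℝ} (hf : Summable f) (h0 : f 0 = 0) :
    ∑' n, f n = ∑' n : ℕ, f (n+1) := by
  rw [Summable.tsum_eq_zero_add hf, h0, zero_add]

lemma hF {z : ℝ} (hz : |z| < 1/2) : HasDerivAt F (F1 z) z := by
  have hc : ∀ n : ℕ, |A n| ≤ ((n:ℝ)+1)^2 := by
    intro n
    calc |A n| ≤ 1 := A_abs_le n
      _ ≤ ((n:ℝ)+1)^2 := by nlinarith [n.cast_nonneg (α := ℝ)]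
  exact key_deriv hc hz

lemma hF1 {z : ℝ} (hz : |z| < 1/2) : HasDerivAt F1 (F2 z) z := by
  have hc : ∀ n : ℕ, |((n:ℝ)+1) * A (n+1)| ≤ ((n:ℝ)+1)^2 := by
    intro n
    rw [abs_mul, abs_of_pos (by positivity : (0:ℝ) < (n:ℝ)+1)]
    calc ((n:ℝ)+1) * |A (n+1)| ≤ ((n:ℝ)+1) * 1 :=
          mul_le_mul_of_nonneg_left (A_abs_le _) (by positivity)
      _ ≤ ((n:ℝ)+1)^2 := by nlinarith [n.cast_nonneg (α := ℝ)]
  have h := key_deriv hc hz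
  convert h using 1
  · rfl
  unfold F2
  apply tsum_congr
  intro n
  push_cast
  ring

lemma F_ode {z : ℝ} (hz : |z| < 1/2) :
    z*(1-z)*F2 z + (1/3 - z)*F1 z + (1/36)*F z = 0 := by
  have hz1 : |z| < 1 := lt_trans hz (by norm_num)
  have hq : ∀ n : ℕ, (0:ℝ) ≤ (n:ℝ) := fun n => n.cast_nonneg
  have hs0 : Summable (fun n : ℕ => A n * z^n) := by
    have := summable_PA hz1 (fun _ => 1) (fun n => n) (fun n => by
      beta_reduce; simp only [abs_one]; nlinarith [hq n])
    simpa using this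
  have hs1 : Summable (fun n : ℕ => ((n:ℝ)+1) * A (n+1) * z^n) :=
    summable_PA hz1 (fun n => (n:ℝ)+1) (fun n => n+1) (fun n => by
      beta_reduce; rw [abs_of_pos (by positivity)]; nlinarith [hq n])
  have hs2 : Summable (fun n : ℕ => ((n:ℝ)+2) * ((n:ℝ)+1) * A (n+2) * z^n) :=
    summable_PA hz1 (fun n => ((n:ℝ)+2) * ((n:ℝ)+1)) (fun n => n+2) (fun n => by
      beta_reduce; rw [abs_of_pos (by positivity)]; nlinarith [hq n])
  have hsa1 : Summable (fun n : ℕ => (n:ℝ) * A n * z^n) :=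
    summable_PA hz1 (fun n => (n:ℝ)) (fun n => n) (fun n => by
      beta_reduce; rw [abs_of_nonneg (hq n)]; nlinarith [hq n])
  have hsa2 : Summable (fun n : ℕ => ((n:ℝ)+1) * (n:ℝ) * A (n+1) * z^n) :=
    summable_PA hz1 (fun n => ((n:ℝ)+1) * (n:ℝ)) (fun n => n+1) (fun n => by
      beta_reduce; rw [abs_of_nonneg (by nlinarith [hq n])]; nlinarith [hq n])
  have hsa3 : Summable (fun n : ℕ => (n:ℝ) * ((n:ℝ)-1) * A n * z^n) :=
    summable_PA hz1 (fun n => (n:ℝ) * ((n:ℝ)-1)) (fun n => n) (fun n => by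
      beta_reduce
      rcases Nat.eq_zero_or_pos n with h | h
      · subst h; norm_num
      · have h1 : (1:ℝ) ≤ (n:ℝ) := by exact_mod_cast h
        rw [abs_of_nonneg (by nlinarith)]; nlinarith)
  -- shifted-sum identities
  have e1 : z * F1 z = ∑' n : ℕ, (n:ℝ) * A n * z^n := by
    rw [shift_tsum hsa1 (by norm_num)]
    unfold F1
    rw [← tsum_mul_left]
    apply tsum_congr
    intro n
    push_cast
    ring
  have e2 : z * F2 z = ∑' n : ℕ, ((n:ℝ)+1) * (n:ℝ) * A (n+1) * z^n := by
    rw [shift_tsum hsa2 (by norm_num)]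
    unfold F2
    rw [← tsum_mul_left]
    apply tsum_congr
    intro n
    push_cast
    ring
  have e3 : z^2 * F2 z = ∑' n : ℕ, (n:ℝ) * ((n:ℝ)-1) * A n * z^n := by
    have h0 : (fun n : ℕ => (n:ℝ) * ((n:ℝ)-1) * A n * z^n) 0 = 0 := by norm_num
    rw [shift_tsum hsa3 h0]
    have hshift2 : Summable (fun n : ℕ => ((n:ℝ)+1) * ((n:ℝ)+1-1) * A (n+1) * z^(n+1)) := by
      have : (fun n : ℕ => (n:ℝ) * ((n:ℝ)-1) * A n * z^n) ∘ (fun n => n+1)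
          = fun n : ℕ => ((n:ℝ)+1) * ((n:ℝ)+1-1) * A (n+1) * z^(n+1) := by
        funext n; simp only [Function.comp_apply]; push_cast; ring
      rw [← this]
      exact hsa3.comp_injective (add_left_injective 1)
    have h1 : (fun n : ℕ => ((n:ℝ)+1) * ((n:ℝ)+1-1) * A (n+1) * z^(n+1)) 0 = 0 := by norm_num
    calc z^2 * F2 z
        = ∑' n : ℕ, ((n:ℝ)+1+1) * ((n:ℝ)+1+1-1) * A (n+1+1) * z^(n+1+1) := by
          unfold F2
          rw [← tsum_mul_left]
          apply tsum_congr
          intro n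
          push_cast
          ring
      _ = ∑' n : ℕ, ((n:ℝ)+1) * ((n:ℝ)+1-1) * A (n+1) * z^(n+1) := by
          rw [shift_tsum hshift2 h1]
          apply tsum_congr
          intro n
          push_cast
          ring
      _ = ∑' n : ℕ, (fun m : ℕ => (m:ℝ) * ((m:ℝ)-1) * A m * z^m) (n+1) := by
          apply tsum_congr
          intro n
          push_cast
          ring
  -- combine
  have key : z*(1-z)*F2 z + (1/3 - z)*F1 z + (1/36)*F z
      = ∑' n : ℕ, ( (((n:ℝ)+1) * (n:ℝ) * A (n+1) * z^n - (n:ℝ) * ((n:ℝ)-1) * A n * z^n)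
          + ((1/3) * (((n:ℝ)+1) * A (n+1) * z^n) - (n:ℝ) * A n * z^n)
          + (1/36) * (A n * z^n) ) := by
    rw [Summable.tsum_add (Summable.add (hsa2.sub hsa3) ((hs1.mul_left _).sub hsa1)) (hs0.mul_left _),
      Summable.tsum_add (hsa2.sub hsa3) ((hs1.mul_left _).sub hsa1),
      Summable.tsum_sub hsa2 hsa3, Summable.tsum_sub (hs1.mul_left _) hsa1,
      tsum_mul_left, tsum_mul_left]
    rw [← e1, ← e2, ← e3]
    unfold F F1
    ring
  rw [key]
  have : ∀ n : ℕ, ( (((n:ℝ)+1) * (n:ℝ) * A (n+1) * z^n - (n:ℝ) * ((n:ℝ)-1) * A n * z^n)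
          + ((1/3) * (((n:ℝ)+1) * A (n+1) * z^n) - (n:ℝ) * A n * z^n)
          + (1/36) * (A n * z^n) ) = 0 := by
    intro n
    have h := A_rec n
    have : (((n:ℝ)+1) * (1/3 + (n:ℝ)) * A (n+1)) * z^n
        = ((1/6 + (n:ℝ)) * (-1/6 + (n:ℝ)) * A n) * z^n := by rw [h]
    nlinarith [this]
  rw [tsum_congr this]
  exact tsum_zero


lemma F_zero : F 0 = 1 := by
  rw [F]
  rw [tsum_eq_single 0 ?_]
  · norm_num [A_zero]
  · intro n hn
    simp [zero_pow hn]



noncomputable section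

def Z (x : ℝ) : ℝ := x * (x + 2)^3 / (2*x + 1)^3
def Z1 (x : ℝ) : ℝ := 2*(x+2)^2*(x-1)^2/(2*x+1)^4
def Z2 (x : ℝ) : ℝ := 36*(x+2)*(x-1)/(2*x+1)^5
def al (x : ℝ) : ℝ := Z x * (1 - Z x) * Z1 x
def be (x : ℝ) : ℝ := -(Z x * (1 - Z x) * Z2 x) + (1/3 - Z x) * Z1 x^2
def ga (x : ℝ) : ℝ := (1/36) * Z1 x^3
def hh (x : ℝ) : ℝ := (1 + 2*x) ^ ((-1 : ℝ)/2) * (1 + x) ^ ((1 : ℝ)/3)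
def R (x : ℝ) : ℝ := -1/(1+2*x) + 1/(3*(1+x))
def Rd (x : ℝ) : ℝ := 2/(1+2*x)^2 - 1/(3*(1+x)^2)
def uu (x : ℝ) : ℝ := x*(1+x)^2*(2*x+1)^3/(x+2)^3
def ud (x : ℝ) : ℝ := (((1+x)^2*(2*x+1)^3 + x*(2*(1+x))*(2*x+1)^3 + x*(1+x)^2*(3*(2*x+1)^2*2)) * (x+2)^3 - x*(1+x)^2*(2*x+1)^3 * (3*(x+2)^2)) / ((x+2)^3)^2
def g (x : ℝ) : ℝ := F (Z x)
def G1 (x : ℝ) : ℝ := F1 (Z x) * Z1 x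
def G2 (x : ℝ) : ℝ := F2 (Z x) * Z1 x^2 + F1 (Z x) * Z2 x
def H1 (x : ℝ) : ℝ := hh x * R x
def H2 (x : ℝ) : ℝ := hh x * (R x^2 + Rd x)
def W (x : ℝ) : ℝ := G1 x * hh x - g x * H1 x
def Wd (x : ℝ) : ℝ := G2 x * hh x - g x * H2 x
def Phi (x : ℝ) : ℝ := W x ^ 3 * uu x
def Phid (x : ℝ) : ℝ := 3 * W x^2 * Wd x * uu x + W x^3 * ud x

lemma hx' {x : ℝ} (hx : |x| < 1/50) : -1/50 < x ∧ x < 1/50 := by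
  have := abs_lt.1 hx; constructor <;> linarith [this.1, this.2]

lemma pos_2x1 {x : ℝ} (hx : |x| < 1/50) : 0 < 2*x + 1 := by linarith [(hx' hx).1]
lemma pos_1x {x : ℝ} (hx : |x| < 1/50) : 0 < 1 + x := by linarith [(hx' hx).1]
lemma pos_x2 {x : ℝ} (hx : |x| < 1/50) : 0 < x + 2 := by linarith [(hx' hx).1]
lemma ne_2x1 {x : ℝ} (hx : |x| < 1/50) : 2*x + 1 ≠ 0 := (pos_2x1 hx).ne'
lemma ne_1x {x : ℝ} (hx : |x| < 1/50) : 1 + x ≠ 0 := (pos_1x hx).ne'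
lemma ne_x2 {x : ℝ} (hx : |x| < 1/50) : x + 2 ≠ 0 := (pos_x2 hx).ne'

lemma absZ {x : ℝ} (hx : |x| < 1/50) : |Z x| < 1/2 := by
  have h1 := hx' hx
  have hp2 := pos_2x1 hx
  have hpx2 := pos_x2 hx
  have h2 : (0:ℝ) < (2*x+1)^3 := pow_pos hp2 3
  rw [Z, abs_div, div_lt_iff₀ (by rwa [abs_of_pos h2])]
  rw [abs_of_pos h2, abs_mul, abs_pow, abs_of_pos hpx2]
  have hb1 : x + 2 ≤ 101/50 := by linarith [h1.2]
  have hb2 : (x+2)^3 ≤ (101/50)^3 := pow_le_pow_left₀ (le_of_lt hpx2) hb1 3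
  have hb3 : (24/25 : ℝ) ≤ 2*x+1 := by linarith [h1.1]
  have hb4 : ((24:ℝ)/25)^3 ≤ (2*x+1)^3 := pow_le_pow_left₀ (by norm_num) hb3 3
  calc |x| * (x+2)^3 ≤ (1/50) * (101/50)^3 := by
        apply mul_le_mul (le_of_lt hx) hb2 (by positivity) (by norm_num)
    _ < (1/2) * ((24/25:ℝ))^3 := by norm_num
    _ ≤ (1/2) * (2*x+1)^3 := by linarith [hb4]

lemma Z_ne {x : ℝ} (hx : |x| < 1/50) (hx0 : x ≠ 0) : Z x ≠ 0 := by
  rw [Z]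
  have h2 : (0:ℝ) < (2*x+1)^3 := pow_pos (pos_2x1 hx) 3
  have h3 : (0:ℝ) < (x+2)^3 := pow_pos (pos_x2 hx) 3
  intro h
  rcases div_eq_zero_iff.1 h with h | h
  · rcases mul_eq_zero.1 h with h | h
    · exact hx0 h
    · exact h3.ne' h
  · exact h2.ne' h

lemma oneZ_ne {x : ℝ} (hx : |x| < 1/50) : 1 - Z x ≠ 0 := by
  have := abs_lt.1 (absZ hx)
  intro h; linarith [this.2]

lemma Z1_ne {x : ℝ} (hx : |x| < 1/50) : Z1 x ≠ 0 := by
  have h1 := hx' hx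
  rw [Z1]
  have ha : (x+2)^2 > 0 := by nlinarith [h1.1]
  have hb : (x-1)^2 > 0 := by nlinarith [h1.2]
  have hc : (2*x+1)^4 > 0 := pow_pos (pos_2x1 hx) 4
  positivity

lemma al_ne {x : ℝ} (hx : |x| < 1/50) (hx0 : x ≠ 0) : al x ≠ 0 :=
  mul_ne_zero (mul_ne_zero (Z_ne hx hx0) (oneZ_ne hx)) (Z1_ne hx)

lemma hh_pos {x : ℝ} (hx : |x| < 1/50) : 0 < hh x := by
  rw [hh]
  have h1 := pos_2x1 hx
  have h2 := pos_1x hx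
  have h1' : (0:ℝ) < 1 + 2*x := by linarith
  positivity

lemma uu_ne {x : ℝ} (hx : |x| < 1/50) (hx0 : x ≠ 0) : uu x ≠ 0 := by
  rw [uu]
  have h1 := pos_1x hx
  have h2 := pos_2x1 hx
  have h3 := pos_x2 hx
  intro h
  rcases div_eq_zero_iff.1 h with h | h
  · rcases mul_eq_zero.1 h with h | h
    · rcases mul_eq_zero.1 h with h | h
      · exact hx0 h
      · exact (pow_pos h1 2).ne' h
    · exact (pow_pos h2 3).ne' h
  · exact (pow_pos h3 3).ne' h

lemma hZ {x : ℝ} (hx : |x| < 1/50) : HasDerivAt Z (Z1 x) x := by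
  have h1 := ne_2x1 hx
  have key := (((hasDerivAt_id x).mul (((hasDerivAt_id x).add_const 2).pow 3)).div
    ((((hasDerivAt_id x).const_mul 2).add_const 1).pow 3) (pow_ne_zero 3 h1))
  refine key.congr_deriv ?_
  rw [Z1]
  simp only [id_eq, Pi.pow_apply, Pi.mul_apply]
  push_cast
  field_simp
  ring

lemma hZ1 {x : ℝ} (hx : |x| < 1/50) : HasDerivAt Z1 (Z2 x) x := by
  have h1 := ne_2x1 hx
  have key := (((((hasDerivAt_id x).add_const 2).pow 2).const_mul 2).mul
      (((hasDerivAt_id x).sub_const 1).pow 2)).div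
    ((((hasDerivAt_id x).const_mul 2).add_const 1).pow 4) (pow_ne_zero 4 h1)
  refine key.congr_deriv ?_
  rw [Z2]
  simp only [id_eq, Pi.pow_apply, Pi.mul_apply]
  push_cast
  field_simp
  ring

lemma hR {x : ℝ} (hx : |x| < 1/50) : HasDerivAt R (Rd x) x := by
  have h1 : (1+2*x) ≠ 0 := by have := pos_2x1 hx; intro h; nlinarith
  have h2 : (3*(1+x)) ≠ 0 := by have := pos_1x hx; intro h; nlinarith
  have key := ((hasDerivAt_const x (-1:ℝ)).div (((hasDerivAt_id x).const_mul 2).const_add 1) h1).add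
    ((hasDerivAt_const x (1:ℝ)).div (((hasDerivAt_id x).const_add 1).const_mul 3) h2)
  refine key.congr_deriv ?_
  rw [Rd]
  simp only [id_eq]
  have h3 : (1+x) ≠ 0 := ne_1x hx
  field_simp
  ring

lemma hu {x : ℝ} (hx : |x| < 1/50) : HasDerivAt uu (ud x) x := by
  have h4 := ne_x2 hx
  have key := (((hasDerivAt_id x).mul (((hasDerivAt_id x).const_add 1).pow 2)).mul
      ((((hasDerivAt_id x).const_mul 2).add_const 1).pow 3)).div
    (((hasDerivAt_id x).add_const 2).pow 3) (pow_ne_zero 3 h4)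
  refine key.congr_deriv ?_
  rw [ud]
  simp only [id_eq, Pi.pow_apply, Pi.mul_apply]
  push_cast
  field_simp

lemma hhh {x : ℝ} (hx : |x| < 1/50) : HasDerivAt hh (hh x * R x) x := by
  have h2 := pos_1x hx
  have h1' : (0:ℝ) < 1 + 2*x := by have := pos_2x1 hx; linarith
  have ha : HasDerivAt (fun y : ℝ => (1 + 2*y) ^ ((-1 : ℝ)/2))
      (((-1:ℝ)/2) * (1+2*x) ^ ((-1:ℝ)/2 - 1) * 2) x := by
    have hin : HasDerivAt (fun y : ℝ => 1 + 2*y) 2 x := by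
      simpa using ((hasDerivAt_id x).const_mul 2).const_add 1
    have hout := Real.hasDerivAt_rpow_const (x := 1+2*x) (p := (-1:ℝ)/2) (Or.inl h1'.ne')
    exact (hout.comp x hin : _)
  have hb : HasDerivAt (fun y : ℝ => (1 + y) ^ ((1 : ℝ)/3))
      (((1:ℝ)/3) * (1+x) ^ ((1:ℝ)/3 - 1) * 1) x := by
    have hin : HasDerivAt (fun y : ℝ => 1 + y) 1 x := by
      simpa using (hasDerivAt_id x).const_add 1
    have hout := Real.hasDerivAt_rpow_const (x := 1+x) (p := (1:ℝ)/3) (Or.inl h2.ne')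
    exact (hout.comp x hin : _)
  have hm := ha.mul hb
  refine hm.congr_deriv ?_
  rw [hh, R]
  have e1 : (1+2*x) ^ ((-1:ℝ)/2 - 1) = (1+2*x) ^ ((-1:ℝ)/2) * (1+2*x)⁻¹ := by
    rw [Real.rpow_sub h1', Real.rpow_one]
    ring
  have e2 : (1+x) ^ ((1:ℝ)/3 - 1) = (1+x) ^ ((1:ℝ)/3) * (1+x)⁻¹ := by
    rw [Real.rpow_sub h2, Real.rpow_one]
    ring
  rw [e1, e2]
  field_simp

end

noncomputable section

def D (x : ℝ) : ℝ := g x / hh x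
def Dd (x : ℝ) : ℝ := W x / hh x ^ 2


lemma Ic {x : ℝ} (hx : |x| < 1/50) :
    al x * (R x^2 + Rd x) + be x * R x + ga x = 0 := by
  have h1 := ne_2x1 hx
  have h2 := ne_1x hx
  have h3 : (1+2*x) ≠ 0 := by intro h; apply h1; linarith
  have h1' : x*2+1 ≠ 0 := by rwa [mul_comm] at h1
  have h3' : 1+x*2 ≠ 0 := by rwa [mul_comm] at h3
  unfold al be ga R Rd Z Z1 Z2
  field_simp
  ring

lemma Id {x : ℝ} (hx : |x| < 1/50) : al x * ud x = 3 * (be x * uu x) := by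
  have h1 := ne_2x1 hx
  have h4 := ne_x2 hx
  have h1' : x*2+1 ≠ 0 := by rwa [mul_comm] at h1
  unfold al be uu ud Z Z1 Z2
  field_simp
  ring

lemma g_ode {x : ℝ} (hx : |x| < 1/50) :
    al x * G2 x + be x * G1 x + ga x * g x = 0 := by
  unfold al be ga G2 G1 g
  linear_combination (Z1 x)^3 * F_ode (absZ hx)

lemma h_ode {x : ℝ} (hx : |x| < 1/50) :
    al x * H2 x + be x * H1 x + ga x * hh x = 0 := by
  unfold H2 H1
  linear_combination hh x * Ic hx

lemma hg {x : ℝ} (hx : |x| < 1/50) : HasDerivAt g (G1 x) x :=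
  (hF (absZ hx)).comp x (hZ hx)

lemma hG1 {x : ℝ} (hx : |x| < 1/50) : HasDerivAt G1 (G2 x) x := by
  have key := ((hF1 (absZ hx)).comp x (hZ hx)).mul (hZ1 hx)
  refine key.congr_deriv ?_
  unfold G2
  simp only [Function.comp_apply]
  ring

lemma hH1 {x : ℝ} (hx : |x| < 1/50) : HasDerivAt H1 (H2 x) x := by
  have key := (hhh hx).mul (hR hx)
  refine key.congr_deriv ?_
  unfold H2
  ring

lemma hW {x : ℝ} (hx : |x| < 1/50) : HasDerivAt W (Wd x) x := by
  have key := ((hG1 hx).mul (hhh hx)).sub ((hg hx).mul (hH1 hx))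
  refine key.congr_deriv ?_
  unfold Wd G2 H2 H1 G1 g
  ring

lemma hPhi {x : ℝ} (hx : |x| < 1/50) : HasDerivAt Phi (Phid x) x := by
  have key := ((hW hx).pow 3).mul (hu hx)
  refine key.congr_deriv ?_
  all_goals (unfold Phid; simp only [Pi.pow_apply]; push_cast; ring)

lemma alWd {x : ℝ} (hx : |x| < 1/50) : al x * Wd x = -(be x * W x) := by
  unfold W Wd
  linear_combination hh x * g_ode hx - g x * h_ode hx

lemma Phid_zero {x : ℝ} (hx : |x| < 1/50) (hx0 : x ≠ 0) : Phid x = 0 := by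
  have h := al_ne hx hx0
  have key : al x * Phid x = 0 := by
    unfold Phid
    linear_combination (3 * W x^2 * uu x) * alWd hx + W x^3 * Id hx
  exact (mul_eq_zero.1 key).resolve_left h

lemma mvt_const {f f' : ℝ → ℝ} {a b : ℝ} (hab : a < b)
    (hf : ∀ x ∈ Icc a b, HasDerivAt f (f' x) x)
    (h0 : ∀ x ∈ Ioo a b, f' x = 0) : f a = f b := by
  obtain ⟨c, hc, he⟩ := exists_hasDerivAt_eq_slope f f' hab
    (fun x hx => (hf x hx).continuousAt.continuousWithinAt)
    (fun x hx => hf x (Ioo_subset_Icc_self hx))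
  rw [h0 c hc] at he
  have hb : b - a ≠ 0 := sub_ne_zero.2 hab.ne'
  field_simp at he
  linarith [he]

lemma Phi_zero : Phi 0 = 0 := by
  have : uu 0 = 0 := by norm_num [uu]
  rw [Phi, this, mul_zero]

lemma W_zero {y : ℝ} (hy : |y| < 1/50) (hy0 : y ≠ 0) : W y = 0 := by
  have habs : ∀ t : ℝ, t ∈ Icc (min y 0) (max y 0) → |t| < 1/50 := by
    intro t ht
    rcases abs_lt.1 hy with ⟨h1, h2⟩
    rcases ht with ⟨ha, hb⟩
    rw [abs_lt]
    rcases le_total y 0 with h | h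
    · simp [min_eq_left h, max_eq_right h] at ha hb
      constructor <;> nlinarith
    · simp [min_eq_right h, max_eq_left h] at ha hb
      constructor <;> nlinarith
  have hPhiy : Phi y = 0 := by
    rcases lt_or_gt_of_ne hy0 with h | h
    · -- y < 0 : interval [y, 0]
      have := mvt_const (f := Phi) (f' := Phid) h
        (fun t ht => hPhi (habs t (by
          rcases ht with ⟨ha, hb⟩
          exact ⟨by simp [min_eq_left (le_of_lt h)]; linarith,
                 by simp [max_eq_right (le_of_lt h)]; linarith⟩)))
        (fun t ht => Phid_zero (habs t ⟨by simp [min_eq_left (le_of_lt h)]; linarith [ht.1],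
            by simp [max_eq_right (le_of_lt h)]; linarith [ht.2]⟩) (by linarith [ht.2] : t ≠ 0))
      rw [this, Phi_zero]
    · -- 0 < y : interval [0, y]
      have := mvt_const (f := Phi) (f' := Phid) h
        (fun t ht => hPhi (habs t ⟨by simp [min_eq_right (le_of_lt h)]; linarith [ht.1],
            by simp [max_eq_left (le_of_lt h)]; linarith [ht.2]⟩))
        (fun t ht => Phid_zero (habs t ⟨by simp [min_eq_right (le_of_lt h)]; linarith [ht.1],
            by simp [max_eq_left (le_of_lt h)]; linarith [ht.2]⟩) (ne_of_gt ht.1))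
      rw [← this, Phi_zero]
  have := hPhiy
  rw [Phi] at this
  rcases mul_eq_zero.1 this with h | h
  · exact pow_eq_zero_iff (by norm_num) |>.1 h
  · exact absurd h (uu_ne hy hy0)

lemma hD {x : ℝ} (hx : |x| < 1/50) : HasDerivAt D (Dd x) x := by
  have key := (hg hx).div (hhh hx) (hh_pos hx).ne'
  refine key.congr_deriv ?_
  all_goals (unfold Dd W G1 g H1; ring)

lemma g_eq_hh {y : ℝ} (hy : |y| < 1/50) : g y = hh y := by
  have hh0 : hh 0 = 1 := by
    rw [hh]
    norm_num
  have hg0 : g 0 = 1 := by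
    have hz0 : Z 0 = 0 := by norm_num [Z]
    rw [g, hz0, F_zero]
  rcases eq_or_ne y 0 with rfl | hy0
  · rw [hg0, hh0]
  have hDy : D y = D 0 := by
    rcases lt_or_gt_of_ne hy0 with h | h
    · have := mvt_const (f := D) (f' := Dd) h
        (fun t ht => hD (by rcases abs_lt.1 hy with ⟨h1,h2⟩; rw [abs_lt]; constructor <;> [linarith [ht.1]; linarith [ht.2]]))
        (fun t ht => by
          have htabs : |t| < 1/50 := by
            rcases abs_lt.1 hy with ⟨h1,h2⟩; rw [abs_lt]
            constructor <;> [linarith [ht.1]; linarith [ht.2]]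
          have : W t = 0 := W_zero htabs (by linarith [ht.2] : t ≠ 0)
          rw [Dd, this, zero_div])
      exact this
    · have := mvt_const (f := D) (f' := Dd) h
        (fun t ht => hD (by rcases abs_lt.1 hy with ⟨h1,h2⟩; rw [abs_lt]; constructor <;> [linarith [ht.1]; linarith [ht.2]]))
        (fun t ht => by
          have htabs : |t| < 1/50 := by
            rcases abs_lt.1 hy with ⟨h1,h2⟩; rw [abs_lt]
            constructor <;> [linarith [ht.1]; linarith [ht.2]]
          have : W t = 0 := W_zero htabs (ne_of_gt ht.1)
          rw [Dd, this, zero_div])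
      exact this.symm
  have hD0 : D 0 = 1 := by rw [D, hg0, hh0, div_one]
  have : g y / hh y = 1 := by rw [← D, hDy, hD0]
  rwa [div_eq_one_iff_eq (hh_pos hy).ne'] at this

end


end Stmt6

theorem stmt6 : ∃ ε > 0, ∀ x : ℝ, |x| < ε →
    hypgeo (1/6) (-1/6) (1/3) (x * (x + 2)^3 / (2*x + 1)^3) =
      (1 + 2*x) ^ ((-1 : ℝ)/2) * (1 + x) ^ ((1 : ℝ)/3) := by
  refine ⟨1/50, by norm_num, fun x hx => ?_⟩
  have key := Stmt6.g_eq_hh hx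
  exact key
end
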